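/- arXiv:1210.4694 — 7 statements merged into one kernel-verified Lean document; each statement's English description precedes it below -/
import Mathlib

section
/- Let P = {x ∈ ℝ^m : aⱼᵀx ≤ bⱼ, j ∈ [n]} be a simple polytope, and let x and y be adjacent vertices lying on the common facets F_{s₂},...,F_{s_m}, with x additionally on F_{s₁} and y additionally on F_{s₀}. Then det[a_{s₀} a_{s₂} ⋯ a_{s_m}] and det[a_{s₁} a_{s₂} ⋯ a_{s_m}] have opposite signs. -/
open Matrix Finset

/-- Let P = {x ∈ ℝ^m : aⱼᵀx ≤ bⱼ, j ∈ [n]} be a simple polytope, and let x, y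
be adjacent vertices lying on the common facets F_{s₂},…,F_{s_m}, with x
additionally on F_{s₁} (but not F_{s₀}) and y additionally on F_{s₀} (but not
F_{s₁}); at each vertex the normal vectors of its m facets are linearly
independent.  Then det[a_{s₀} a_{s₂} ⋯ a_{s_m}] and det[a_{s₁} a_{s₂} ⋯ a_{s_m}]
have opposite signs. -/
theorem stmt_5 (m n : ℕ) (hm : 0 < m)
    (a : Fin n → Fin m → ℝ) (b : Fin n → ℝ)
    (s : Fin (m + 1) → Fin n)
    (x y : Fin m → ℝ)
    (hxP : ∀ j, ∑ i, a j i * x i ≤ b j)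
    (hyP : ∀ j, ∑ i, a j i * y i ≤ b j)
    (hx : ∀ p : Fin (m + 1), p ≠ 0 → ∑ i, a (s p) i * x i = b (s p))
    (hy : ∀ p : Fin (m + 1), p ≠ 1 → ∑ i, a (s p) i * y i = b (s p))
    (hx0 : ∑ i, a (s 0) i * x i < b (s 0))
    (hy1 : ∑ i, a (s 1) i * y i < b (s 1))
    (hindx : LinearIndependent ℝ (fun p : Fin m => a (s p.succ)))
    (hindy : LinearIndependent ℝ
      (fun p : Fin m => if p.val = 0 then a (s 0) else a (s p.succ))) :
    (Matrix.of fun i j : Fin m => if j.val = 0 then a (s 0) i else a (s j.succ) i).det *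
      (Matrix.of fun i j : Fin m => if j.val = 0 then a (s 1) i else a (s j.succ) i).det < 0 := by
  haveI : NeZero m := ⟨hm.ne'⟩
  have h01 : (0 : Fin (m + 1)) ≠ 1 := by
    intro h
    have := congrArg Fin.val h
    simp [Fin.val_one, Nat.mod_eq_of_lt (by omega : 1 < m + 1)] at this
  -- the matrix with columns a (s 1), a (s 2), ..., a (s m)
  set M : Matrix (Fin m) (Fin m) ℝ := Matrix.of (fun i j => a (s j.succ) i) with hMdef
  have hM1 : (Matrix.of fun i j : Fin m => if j.val = 0 then a (s 1) i else a (s j.succ) i) = M := by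
    ext i j
    by_cases h : j.val = 0
    · have hj : j = 0 := Fin.ext (by simp [h])
      simp [hMdef, h, hj]
    · simp [hMdef, h, show j ≠ 0 from fun hh => h (by simp [hh])]
  have hUnit : IsUnit M := by
    rw [← Matrix.isUnit_transpose, ← Matrix.linearIndependent_rows_iff_isUnit]
    exact hindx
  have hdet : M.det ≠ 0 := ((Matrix.isUnit_iff_isUnit_det M).mp hUnit).ne_zero
  set v : Fin m → ℝ := fun i => y i - x i with hvdef
  have h0v : 0 < ∑ i, a (s 0) i * v i := by
    have h1 := hy 0 h01
    have : ∑ i, a (s 0) i * v i = b (s 0) - ∑ i, a (s 0) i * x i := by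
      rw [← h1, ← Finset.sum_sub_distrib]
      congr 1; ext i; simp [hvdef]; ring
    rw [this]; linarith
  have h1v : ∑ i, a (s 1) i * v i < 0 := by
    have h1 := hx 1 h01.symm
    have : ∑ i, a (s 1) i * v i = ∑ i, a (s 1) i * y i - b (s 1) := by
      rw [← h1, ← Finset.sum_sub_distrib]
      congr 1; ext i; simp [hvdef]; ring
    rw [this]; linarith
  have hpv : ∀ p : Fin (m + 1), p ≠ 0 → p ≠ 1 → ∑ i, a (s p) i * v i = 0 := by
    intro p hp0 hp1
    have h1 := hx p hp0
    have h2 := hy p hp1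
    have : ∑ i, a (s p) i * v i = (∑ i, a (s p) i * y i) - ∑ i, a (s p) i * x i := by
      rw [← Finset.sum_sub_distrib]
      congr 1; ext i; simp [hvdef]; ring
    rw [this, h1, h2, sub_self]
  -- the coordinates of a (s 0) in the column basis of M
  set c : Fin m → ℝ := M⁻¹ *ᵥ a (s 0) with hcdef
  have hMc : M *ᵥ c = a (s 0) := by
    rw [hcdef, Matrix.mulVec_mulVec, Matrix.mul_nonsing_inv _ ((Matrix.isUnit_iff_isUnit_det M).mp hUnit), Matrix.one_mulVec]
  -- the "x" determinant equals det M * c 0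
  have hdet0 : (Matrix.of fun i j : Fin m => if j.val = 0 then a (s 0) i else a (s j.succ) i).det
      = M.det * c 0 := by
    have hupd : (Matrix.of fun i j : Fin m => if j.val = 0 then a (s 0) i else a (s j.succ) i)
        = M.updateCol 0 (a (s 0)) := by
      ext i j
      by_cases h : j.val = 0
      · have hj : j = 0 := Fin.ext (by simp [h])
        simp [hMdef, h, hj, Matrix.updateCol_apply]
      · have hj : j ≠ 0 := fun hh => h (by simp [hh])
        simp [hMdef, h, hj, Matrix.updateCol_apply]
    rw [hupd, ← Matrix.cramer_apply, ← hMc, Matrix.cramer_eq_adjugate_mulVec,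
      Matrix.mulVec_mulVec, Matrix.adjugate_mul, Matrix.smul_mulVec,
      Matrix.one_mulVec]
    simp
  -- key dot product computation
  have hw : Mᵀ *ᵥ v = Pi.single 0 (∑ i, a (s 1) i * v i) := by
    funext j
    have hMv : (Mᵀ *ᵥ v) j = ∑ i, a (s j.succ) i * v i := by
      simp [Matrix.mulVec, dotProduct, hMdef]
    rw [hMv, Pi.single_apply]
    by_cases h : j = 0
    · subst h; rw [if_pos rfl, Fin.succ_zero_eq_one']
    · rw [if_neg h]
      refine hpv j.succ (Fin.succ_ne_zero j) (fun hh => h ?_)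
      simpa using Fin.succ_injective _ (hh.trans Fin.succ_zero_eq_one'.symm)
  have hkey : ∑ i, a (s 0) i * v i = c 0 * ∑ i, a (s 1) i * v i :=
    calc ∑ i, a (s 0) i * v i = (M *ᵥ c) ⬝ᵥ v := by rw [hMc]; rfl
      _ = v ⬝ᵥ (M *ᵥ c) := dotProduct_comm _ _
      _ = (Mᵀ *ᵥ v) ⬝ᵥ c := by rw [Matrix.dotProduct_mulVec, ← Matrix.mulVec_transpose]
      _ = (∑ i, a (s 1) i * v i) * c 0 := by rw [hw, single_dotProduct]
      _ = c 0 * ∑ i, a (s 1) i * v i := mul_comm _ _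
  have hc0 : c 0 < 0 := by nlinarith
  have hdet1 : (Matrix.of fun i j : Fin m => if j.val = 0 then a (s 1) i else a (s j.succ) i).det
      = M.det := by rw [hM1]
  rw [hdet0, hdet1]
  have hre : M.det * c 0 * M.det = c 0 * (M.det * M.det) := by ring
  rw [hre]
  exact mul_neg_of_neg_of_pos hc0 (mul_self_pos.mpr hdet)
end

section
/- In a Nash equilibrium of the unit-vector game (A, Cᵀ) where each column of A is a unit vector and P = {x : x ≥ 0, Cx ≤ 1} is bounded, the equilibrium payoff u to player 1 and v to player 2 are both strictly positive. -/
open Matrix Finset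

/-- In a Nash equilibrium of the unit-vector game (A, Cᵀ), where each column
of A is a standard unit vector and P = {x : x ≥ 0, Cx ≤ 1} is bounded, the
equilibrium payoffs u to player 1 and v to player 2 are both strictly
positive. -/
theorem stmt_7 (m k : ℕ)
    (A : Matrix (Fin m) (Fin k) ℝ) (C : Matrix (Fin k) (Fin m) ℝ)
    (hA : ∀ j : Fin k, ∃ i : Fin m, ∀ i', A i' j = if i' = i then 1 else 0)
    (hbdd : Bornology.IsBounded
      {x : Fin m → ℝ | (∀ i, 0 ≤ x i) ∧ ∀ j, C.mulVec x j ≤ 1})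
    (xh : Fin m → ℝ) (yh : Fin k → ℝ)
    (hx1 : ∀ i, 0 ≤ xh i) (hx2 : ∑ i, xh i = 1)
    (hy1 : ∀ j, 0 ≤ yh j) (hy2 : ∑ j, yh j = 1)
    (u v : ℝ)
    (hu : ∀ i, A.mulVec yh i ≤ u) (hucomp : ∀ i, 0 < xh i → A.mulVec yh i = u)
    (hv : ∀ j, C.mulVec xh j ≤ v) (hvcomp : ∀ j, 0 < yh j → C.mulVec xh j = v)
    (hupay : u = xh ⬝ᵥ A.mulVec yh) (hvpay : v = yh ⬝ᵥ C.mulVec xh) :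
    0 < u ∧ 0 < v := by
  -- sum of entries of A.mulVec yh equals 1
  have hsum : ∑ i, A.mulVec yh i = 1 := by
    have : ∑ i, A.mulVec yh i = ∑ j, (∑ i, A i j) * yh j := by
      simp only [Matrix.mulVec, dotProduct]
      rw [Finset.sum_comm]
      simp [Finset.sum_mul]
    rw [this]
    have hcol : ∀ j, (∑ i, A i j) = 1 := by
      intro j
      obtain ⟨i, hi⟩ := hA j
      simp [hi]
    simp only [hcol, one_mul, hy2]
  have hupos : 0 < u := by
    by_contra h
    push_neg at h
    have : ∑ i, A.mulVec yh i ≤ 0 :=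
      Finset.sum_nonpos fun i _ => le_trans (hu i) h
    linarith
  refine ⟨hupos, ?_⟩
  by_contra h
  push_neg at h
  -- then t • xh lies in the set for all t ≥ 0, contradicting boundedness
  obtain ⟨r, hr⟩ := isBounded_iff_forall_norm_le.1 hbdd
  have hmem : ∀ t : ℝ, 0 ≤ t →
      (t • xh) ∈ {x : Fin m → ℝ | (∀ i, 0 ≤ x i) ∧ ∀ j, C.mulVec x j ≤ 1} := by
    intro t ht
    constructor
    · intro i; exact mul_nonneg ht (hx1 i)
    · intro j
      have : C.mulVec (t • xh) j = t * C.mulVec xh j := by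
        rw [Matrix.mulVec_smul]; rfl
      rw [this]
      have : t * C.mulVec xh j ≤ 0 :=
        mul_nonpos_of_nonneg_of_nonpos ht (le_trans (hv j) h)
      linarith
  have hxne : xh ≠ 0 := by
    intro h0
    rw [h0] at hx2
    simp at hx2
  have hnx : 0 < ‖xh‖ := norm_pos_iff.2 hxne
  have hr0 : 0 ≤ r := le_trans (norm_nonneg xh) (hr xh (by simpa using hmem 1 zero_le_one))
  set t := (r + 1) / ‖xh‖ with ht
  have htpos : 0 ≤ t := div_nonneg (by linarith) hnx.le
  have := hr (t • xh) (hmem t htpos)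
  rw [norm_smul, Real.norm_eq_abs, abs_of_nonneg htpos, ht,
    div_mul_cancel₀ _ hnx.ne'] at this
  linarith
end

section
/- In a labeled oriented pivoting system, the two completely labeled states at the ends of any complementary pivoting path with missing label w have opposite signs; consequently there are equally many CL states of sign +1 as of sign −1. -/
/-- A pivoting system (S, V, m, r, f). -/
structure PivotSystem (S V : Type*) (m : ℕ) where
  r : S → Fin m → V
  f : S → Fin m → S
  perm : S → Fin m → Equiv.Perm (Fin m)
  newNode : S → Fin m → V
  new_ne : ∀ s i, newNode s i ≠ r s i
  rep : ∀ s i j, r (f s i) (perm s i j) = if j = i then newNode s i else r s j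
  back : ∀ s i, f (f s i) (perm s i i) = s

/-- A state is completely labeled if its representation carries all labels. -/
def IsCL {S V : Type*} {m : ℕ} (P : PivotSystem S V m) (l : V → Fin m)
    (s : S) : Prop :=
  ∀ c : Fin m, ∃ i, l (P.r s i) = c

section Aux

open Equiv Finset
open scoped Classical

variable {S V : Type*} {m : ℕ} (P : PivotSystem S V m) (l : V → Fin m) (w : Fin m)

/-- A port of a state `s` is a slot `i` such that all labels except `w`
appear among the other slots. -/
def IsPort (s : S) (i : Fin m) : Prop :=
  ∀ c, c ≠ w → ∃ k, k ≠ i ∧ l (P.r s k) = c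

lemma exists_portPerm {s : S} {i : Fin m} (h : IsPort P l w s i) :
    ∃ e : Equiv.Perm (Fin m), e i = w ∧ ∀ k, k ≠ i → e k = l (P.r s k) := by
  have hsurj : Function.Surjective (fun k => if k = i then w else l (P.r s k)) := by
    intro c
    by_cases hc : c = w
    · exact ⟨i, by simp [hc]⟩
    · obtain ⟨k, hk, hlk⟩ := h c hc
      exact ⟨k, by simp [hk, hlk]⟩
  have hb := Finite.surjective_iff_bijective.mp hsurj
  refine ⟨Equiv.ofBijective _ hb, by simp [Equiv.ofBijective_apply], fun k hk => ?_⟩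
  simp [Equiv.ofBijective_apply, hk]

/-- The permutation associated to a port. -/
noncomputable def pp (s : S) (i : Fin m) : Equiv.Perm (Fin m) :=
  if h : IsPort P l w s i then (exists_portPerm P l w h).choose else 1

lemma pp_spec {s : S} {i : Fin m} (h : IsPort P l w s i) :
    pp P l w s i i = w ∧ ∀ k, k ≠ i → pp P l w s i k = l (P.r s k) := by
  rw [pp, dif_pos h]; exact (exists_portPerm P l w h).choose_spec

lemma pp_unique {s : S} {i : Fin m} (h : IsPort P l w s i) (e : Equiv.Perm (Fin m))
    (h1 : e i = w) (h2 : ∀ k, k ≠ i → e k = l (P.r s k)) : e = pp P l w s i := by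
  ext k
  by_cases hk : k = i
  · subst hk; rw [h1, (pp_spec P l w h).1]
  · rw [h2 k hk, (pp_spec P l w h).2 k hk]

lemma label_ne {s : S} {i : Fin m} (h : IsPort P l w s i) {k : Fin m} (hk : k ≠ i) :
    l (P.r s k) ≠ w := by
  intro heq
  apply hk
  apply (pp P l w s i).injective
  rw [(pp_spec P l w h).2 k hk, (pp_spec P l w h).1, heq]


/-- The sign of a port. -/
noncomputable def ps (σ : S → ℤ) (s : S) (i : Fin m) : ℤ :=
  σ s * (Equiv.Perm.sign (pp P l w s i) : ℤ)

lemma ps_ne_zero (σ : S → ℤ) (hσval : ∀ s, σ s = 1 ∨ σ s = -1) (s : S) (i : Fin m) :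
    ps P l w σ s i ≠ 0 := by
  apply mul_ne_zero
  · rcases hσval s with h | h <;> rw [h] <;> decide
  · exact Units.ne_zero _

/-- Two distinct ports of the same state have opposite signs. -/
lemma ps_two_ports (σ : S → ℤ) {s : S} {i₁ i₂ : Fin m} (h₁ : IsPort P l w s i₁)
    (h₂ : IsPort P l w s i₂) (hne : i₁ ≠ i₂) : ps P l w σ s i₂ = - ps P l w σ s i₁ := by
  set d₁ := l (P.r s i₁) with hd₁
  set d₂ := l (P.r s i₂) with hd₂
  have hd₁w : d₁ ≠ w := label_ne P l w h₂ hne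
  have hd₂w : d₂ ≠ w := label_ne P l w h₁ (Ne.symm hne)
  have hdd : d₁ = d₂ := by
    by_contra hdd
    obtain ⟨k, hk1, hlk⟩ := h₁ d₁ hd₁w
    have hk2 : k ≠ i₂ := by
      intro hk; rw [hk] at hlk; exact hdd hlk.symm
    apply hk1
    apply (pp P l w s i₂).injective
    rw [(pp_spec P l w h₂).2 k hk2, (pp_spec P l w h₂).2 i₁ hne, hlk]
  have key : pp P l w s i₂ = Equiv.swap w d₂ * pp P l w s i₁ := by
    refine (pp_unique P l w h₂ _ ?_ ?_).symm
    · show Equiv.swap w d₂ (pp P l w s i₁ i₂) = w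
      rw [(pp_spec P l w h₁).2 i₂ (Ne.symm hne), ← hd₂, Equiv.swap_apply_right]
    · intro k hk
      show Equiv.swap w d₂ (pp P l w s i₁ k) = l (P.r s k)
      by_cases hk1 : k = i₁
      · subst hk1
        rw [(pp_spec P l w h₁).1, Equiv.swap_apply_left, ← hd₁, hdd]
      · rw [(pp_spec P l w h₁).2 k hk1]
        have hlw : l (P.r s k) ≠ w := label_ne P l w h₁ hk1
        have hld : l (P.r s k) ≠ d₂ := by
          intro hl
          apply hk1
          apply (pp P l w s i₂).injective
          rw [(pp_spec P l w h₂).2 k hk, (pp_spec P l w h₂).2 i₁ hne, hl, ← hd₁, hdd]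
        exact Equiv.swap_apply_of_ne_of_ne hlw hld
  have : Equiv.Perm.sign (pp P l w s i₂) = - Equiv.Perm.sign (pp P l w s i₁) := by
    rw [key, map_mul, Equiv.Perm.sign_swap (Ne.symm hd₂w), neg_one_mul]
  unfold ps
  rw [this]
  push_cast
  ring


lemma port_pivot {s : S} {i : Fin m} (h : IsPort P l w s i) :
    IsPort P l w (P.f s i) (P.perm s i i) := by
  intro c hc
  obtain ⟨k, hk, hlk⟩ := h c hc
  refine ⟨P.perm s i k, fun he => hk ((P.perm s i).injective he), ?_⟩
  rw [P.rep s i k, if_neg hk, hlk]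

lemma pp_pivot {s : S} {i : Fin m} (h : IsPort P l w s i) :
    pp P l w (P.f s i) (P.perm s i i) = pp P l w s i * (P.perm s i)⁻¹ := by
  refine (pp_unique P l w (port_pivot P l w h) _ ?_ ?_).symm
  · show pp P l w s i ((P.perm s i)⁻¹ (P.perm s i i)) = w
    rw [Equiv.Perm.inv_def, Equiv.symm_apply_apply, (pp_spec P l w h).1]
  · intro k hk
    set j := (P.perm s i)⁻¹ k with hj
    have hjk : P.perm s i j = k := Equiv.apply_symm_apply _ _
    have hji : j ≠ i := by intro hji; apply hk; rw [← hjk, hji]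
    show pp P l w s i j = l (P.r (P.f s i) k)
    rw [← hjk, P.rep s i j, if_neg hji, (pp_spec P l w h).2 j hji]

lemma ps_pivot (σ : S → ℤ)
    (hσ : ∀ s i, σ (P.f s i) = -σ s * (Equiv.Perm.sign (P.perm s i) : ℤ))
    {s : S} {i : Fin m} (h : IsPort P l w s i) :
    ps P l w σ (P.f s i) (P.perm s i i) = - ps P l w σ s i := by
  unfold ps
  rw [pp_pivot P l w h, hσ, map_mul, map_inv, Int.units_inv_eq_self]
  have h2 : ((Equiv.Perm.sign (P.perm s i) : ℤˣ) : ℤ) *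
      ((Equiv.Perm.sign (P.perm s i) : ℤˣ) : ℤ) = 1 := by
    rcases Int.units_eq_one_or (Equiv.Perm.sign (P.perm s i)) with h | h <;> rw [h] <;> decide
  push_cast
  linear_combination (-(σ s) * ((Equiv.Perm.sign (pp P l w s i) : ℤˣ) : ℤ)) * h2


lemma cl_ports (σ : S → ℤ) (sgn : S → ℤ)
    (hsgn : ∀ (s : S) (e : Equiv.Perm (Fin m)),
      (∀ i, e i = l (P.r s i)) → sgn s = σ s * (Equiv.Perm.sign e : ℤ))
    {s : S} (hs : IsCL P l s) :
    ∃ i₀, (∀ i, IsPort P l w s i ↔ i = i₀) ∧ ps P l w σ s i₀ = sgn s := by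
  obtain ⟨i₀, hi₀⟩ := hs w
  have hport : IsPort P l w s i₀ := by
    intro c hc
    obtain ⟨k, hk⟩ := hs c
    refine ⟨k, ?_, hk⟩
    intro hki; rw [hki, hi₀] at hk; exact hc hk.symm
  refine ⟨i₀, fun i => ⟨fun hi => ?_, fun hi => hi ▸ hport⟩, ?_⟩
  · by_contra hne
    exact label_ne P l w hi (fun h => hne h.symm) hi₀
  · have he : ∀ k, pp P l w s i₀ k = l (P.r s k) := by
      intro k
      by_cases hk : k = i₀
      · subst hk; rw [(pp_spec P l w hport).1, hi₀]
      · exact (pp_spec P l w hport).2 k hk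
    rw [ps, hsgn s (pp P l w s i₀) he]

lemma noncl_ports {s : S} (hncl : ¬ IsCL P l s) {i : Fin m} (h : IsPort P l w s i) :
    ∃ k, k ≠ i ∧ IsPort P l w s k := by
  set d := l (P.r s i) with hd
  have hdw : d ≠ w := by
    intro hdw
    apply hncl
    intro c
    by_cases hc : c = w
    · exact ⟨i, by rw [← hd, hdw, hc]⟩
    · obtain ⟨k, _, hk⟩ := h c hc; exact ⟨k, hk⟩
  obtain ⟨k, hki, hk⟩ := h d hdw
  refine ⟨k, hki, ?_⟩
  intro c hc
  by_cases hcd : c = d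
  · exact ⟨i, fun hik => hki (hik.symm), by rw [← hd, hcd]⟩
  · obtain ⟨j, hji, hj⟩ := h c hc
    refine ⟨j, ?_, hj⟩
    intro hjk; rw [hjk, hk] at hj; exact hcd hj.symm

lemma state_sum (σ : S → ℤ) (hσval : ∀ s, σ s = 1 ∨ σ s = -1) (sgn : S → ℤ)
    (hsgn : ∀ (s : S) (e : Equiv.Perm (Fin m)),
      (∀ i, e i = l (P.r s i)) → sgn s = σ s * (Equiv.Perm.sign e : ℤ)) (s : S) :
    ∑ i ∈ Finset.univ.filter (fun i => IsPort P l w s i), ps P l w σ s i =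
      if IsCL P l s then sgn s else 0 := by
  by_cases hs : IsCL P l s
  · rw [if_pos hs]
    obtain ⟨i₀, hiff, hps⟩ := cl_ports P l w σ sgn hsgn hs
    have hflt : Finset.univ.filter (fun i => IsPort P l w s i) = {i₀} := by
      ext i; simp [hiff]
    rw [hflt, Finset.sum_singleton, hps]
  · rw [if_neg hs]
    by_cases hex : ∃ i, IsPort P l w s i
    · obtain ⟨i, hi⟩ := hex
      obtain ⟨k, hki, hk⟩ := noncl_ports P l w hs hi
      have hflt : Finset.univ.filter (fun j => IsPort P l w s j) = {i, k} := by
        ext j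
        simp only [Finset.mem_filter, Finset.mem_univ, true_and, Finset.mem_insert,
          Finset.mem_singleton]
        constructor
        · intro hj
          by_contra hjc
          push_neg at hjc
          obtain ⟨hji, hjk⟩ := hjc
          have e1 := ps_two_ports P l w σ hi hj (fun h => hji h.symm)
          have e2 := ps_two_ports P l w σ hk hj (fun h => hjk h.symm)
          have e3 := ps_two_ports P l w σ hi hk (fun h => hki h.symm)
          have e4 := ps_ne_zero P l w σ hσval s i
          omega
        · rintro (rfl | rfl) <;> assumption
      rw [hflt, Finset.sum_pair (fun h => hki h.symm)]
      rw [ps_two_ports P l w σ hi hk (fun h => hki h.symm)]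
      ring
    · push_neg at hex
      rw [Finset.filter_false_of_mem (fun i _ => hex i), Finset.sum_empty]


lemma sgn_pm (σ : S → ℤ) (hσval : ∀ s, σ s = 1 ∨ σ s = -1) (sgn : S → ℤ)
    (hsgn : ∀ (s : S) (e : Equiv.Perm (Fin m)),
      (∀ i, e i = l (P.r s i)) → sgn s = σ s * (Equiv.Perm.sign e : ℤ))
    {s : S} (hs : IsCL P l s) (w0 : Fin m) : sgn s = 1 ∨ sgn s = -1 := by
  obtain ⟨i₀, _, hps⟩ := cl_ports P l w0 σ sgn hsgn hs
  rw [← hps, ps]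
  rcases hσval s with h | h <;>
    rcases Int.units_eq_one_or (Equiv.Perm.sign (pp P l w0 s i₀)) with h2 | h2 <;>
      rw [h, h2] <;> simp

lemma total_sum_zero [Fintype S] (σ : S → ℤ) (hσval : ∀ s, σ s = 1 ∨ σ s = -1)
    (hσ : ∀ s i, σ (P.f s i) = -σ s * (Equiv.Perm.sign (P.perm s i) : ℤ)) :
    ∑ p ∈ Finset.univ.filter (fun p : S × Fin m => IsPort P l w p.1 p.2),
      ps P l w σ p.1 p.2 = 0 := by
  set A := Finset.univ.filter (fun p : S × Fin m => IsPort P l w p.1 p.2) with hA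
  set g : S × Fin m → S × Fin m := fun p => (P.f p.1 p.2, P.perm p.1 p.2 p.2) with hg
  have hmem : ∀ p, p ∈ A ↔ IsPort P l w p.1 p.2 := by
    intro p; simp [hA]
  have hmaps : ∀ p ∈ A, g p ∈ A := by
    intro p hp
    rw [hmem] at hp ⊢
    exact port_pivot P l w hp
  have hinj : ∀ p₁ ∈ A, ∀ p₂ ∈ A, g p₁ = g p₂ → p₁ = p₂ := by
    rintro ⟨s₁, i₁⟩ hp₁ ⟨s₂, i₂⟩ hp₂ heq
    rw [hmem] at hp₁ hp₂
    simp only [hg, Prod.mk.injEq] at heq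
    obtain ⟨hf, hp⟩ := heq
    have hs : s₁ = s₂ := by
      have h1 := P.back s₁ i₁
      have h2 := P.back s₂ i₂
      rw [hf, hp] at h1
      rw [h1] at h2
      exact h2
    subst hs
    by_cases hii : i₁ = i₂
    · rw [hii]
    · exfalso
      have e1 := ps_pivot P l w σ hσ hp₁
      have e2 := ps_pivot P l w σ hσ hp₂
      rw [hf, hp] at e1
      have e3 := ps_two_ports P l w σ hp₁ hp₂ hii
      have e4 := ps_ne_zero P l w σ hσval s₁ i₁
      rw [e2] at e1
      dsimp only at e1 e3
      exact e4 (by linarith)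
  have himg : A.image g = A := by
    apply Finset.eq_of_subset_of_card_le
    · exact Finset.image_subset_iff.mpr hmaps
    · rw [Finset.card_image_of_injOn hinj]
  have hT : ∑ p ∈ A, ps P l w σ p.1 p.2 = ∑ p ∈ A, ps P l w σ (g p).1 (g p).2 := by
    conv_lhs => rw [← himg]
    exact Finset.sum_image hinj
  have hT2 : ∑ p ∈ A, ps P l w σ (g p).1 (g p).2 = -∑ p ∈ A, ps P l w σ p.1 p.2 := by
    rw [← Finset.sum_neg_distrib]
    apply Finset.sum_congr rfl
    intro p hp
    rw [hmem] at hp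
    exact ps_pivot P l w σ hσ hp
  rw [hT2] at hT
  linarith

end Aux

/-- In a labeled oriented pivoting system (σ(t) = −σ(s)·parity(π(s,i)) for
t = f(s,i)), the two CL states at the ends of a complementary pivoting path
have opposite signs, where the sign of a CL state s is σ(s) times the parity
of the permutation (l(s₁),…,l(s_m)); consequently, there are equally many CL
states of sign +1 as of sign −1. -/
theorem stmt_9 {S V : Type*} [Fintype S] {m : ℕ} (hm : 0 < m)
    (P : PivotSystem S V m) (l : V → Fin m)
    (σ : S → ℤ) (hσval : ∀ s, σ s = 1 ∨ σ s = -1)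
    (hσ : ∀ s i, σ (P.f s i) = -σ s * (Equiv.Perm.sign (P.perm s i) : ℤ))
    (sgn : S → ℤ)
    (hsgn : ∀ (s : S) (e : Equiv.Perm (Fin m)),
      (∀ i, e i = l (P.r s i)) → sgn s = σ s * (Equiv.Perm.sign e : ℤ)) :
    Set.ncard {s : S | IsCL P l s ∧ sgn s = 1} =
      Set.ncard {s : S | IsCL P l s ∧ sgn s = -1} := by
  classical
  set w : Fin m := ⟨0, hm⟩ with hw
  have hsum : ∑ s : S, (if IsCL P l s then sgn s else 0) = 0 := by
    have h := total_sum_zero P l w σ hσval hσ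
    rw [Finset.sum_filter, Fintype.sum_prod_type] at h
    have h2 : ∀ s : S, (if IsCL P l s then sgn s else 0)
        = ∑ y : Fin m, if IsPort P l w s y then ps P l w σ s y else 0 := by
      intro s
      rw [← state_sum P l w σ hσval sgn hsgn s, Finset.sum_filter]
    rw [Finset.sum_congr rfl (fun s _ => h2 s)]
    exact h
  set C := Finset.univ.filter (fun s => IsCL P l s) with hC
  have hCL : ∑ s ∈ C, sgn s = 0 := by
    rw [hC, Finset.sum_filter]; exact hsum
  have hsplit := Finset.sum_filter_add_sum_filter_not C (fun s => sgn s = 1) sgn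
  have h1 : ∑ s ∈ C.filter (fun s => sgn s = 1), sgn s
      = ((C.filter (fun s => sgn s = 1)).card : ℤ) := by
    rw [Finset.sum_congr rfl (fun s hs => (Finset.mem_filter.mp hs).2)]
    simp
  have h2 : C.filter (fun s => ¬ sgn s = 1) = C.filter (fun s => sgn s = -1) := by
    ext s
    simp only [Finset.mem_filter, hC, Finset.mem_univ, true_and]
    constructor
    · rintro ⟨hcl, hns⟩
      exact ⟨hcl, (sgn_pm P l σ hσval sgn hsgn hcl w).resolve_left hns⟩
    · rintro ⟨hcl, hs⟩
      refine ⟨hcl, by rw [hs]; norm_num⟩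
  have h3 : ∑ s ∈ C.filter (fun s => sgn s = -1), sgn s
      = -((C.filter (fun s => sgn s = -1)).card : ℤ) := by
    rw [Finset.sum_congr rfl (fun s hs => (Finset.mem_filter.mp hs).2)]
    simp
  rw [h1, h2, h3, hCL] at hsplit
  have hs1 : {s : S | IsCL P l s ∧ sgn s = 1} = ↑(C.filter (fun s => sgn s = 1)) := by
    ext s; simp [hC]
  have hs2 : {s : S | IsCL P l s ∧ sgn s = -1} = ↑(C.filter (fun s => sgn s = -1)) := by
    ext s; simp [hC]
  rw [hs1, hs2, Set.ncard_coe_finset, Set.ncard_coe_finset]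
  omega
end

section
/- Pivoting from an ACL state s at a duplicate-label position i to t = f(s,i) in a labeled oriented pivoting system satisfies sign(s,i) = −sign(t,π(i)), where π = π(s,i). -/
/-- Pivoting from an ACL state s at a duplicate-label position i to
t = f(s,i) in a labeled oriented pivoting system satisfies
sign(s,i) = −sign(t, π(i)) where π = π(s,i):  here e₁ is the permutation
l(r(s)) with position i replaced by the missing label w, and e₂ is the
permutation l(r(t)) with position π(i) replaced by w. -/
theorem stmt_11 {S V : Type*} {m : ℕ}
    (P : PivotSystem S V m) (l : V → Fin m)
    (σ : S → ℤ) (hσval : ∀ s, σ s = 1 ∨ σ s = -1)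
    (hσ : ∀ s i, σ (P.f s i) = -σ s * (Equiv.Perm.sign (P.perm s i) : ℤ))
    (s : S) (i w : Fin m)
    (e₁ e₂ : Equiv.Perm (Fin m))
    (he₁ : ∀ p, e₁ p = if p = i then w else l (P.r s p))
    (he₂ : ∀ p, e₂ p = if p = P.perm s i i then w else l (P.r (P.f s i) p)) :
    σ s * (Equiv.Perm.sign e₁ : ℤ) =
      -(σ (P.f s i) * (Equiv.Perm.sign e₂ : ℤ)) := by
  have key : e₂ * P.perm s i = e₁ := by
    ext p
    simp only [Equiv.Perm.mul_apply, he₁, he₂]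
    by_cases hp : p = i
    · simp [hp]
    · rw [if_neg (by simpa using fun h => hp ((P.perm s i).injective h)),
        if_neg hp, P.rep, if_neg hp]
  have hs : (Equiv.Perm.sign e₁ : ℤ) =
      (Equiv.Perm.sign e₂ : ℤ) * (Equiv.Perm.sign (P.perm s i) : ℤ) := by
    rw [← key, map_mul]; push_cast; ring
  have hsq : (Equiv.Perm.sign (P.perm s i) : ℤ) *
      (Equiv.Perm.sign (P.perm s i) : ℤ) = 1 := by
    rcases Int.units_eq_one_or (Equiv.Perm.sign (P.perm s i)) with h | h <;> rw [h] <;> norm_num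
  rw [hσ, hs]
  have h2 : ((Equiv.Perm.sign (P.perm s i) : ℤ))^2 = 1 := by
    rw [sq]; exact hsq
  nlinarith [hsq]
end

section
/- If each oik 𝓡_p in an oik family is coherently oriented by σ_p, then the oik-sum is coherently oriented by σ(R₁ ⊎ ⋯ ⊎ R_h) = Π_p σ_p(R_p), with nodes of [h]×V ordered lexicographically. -/
open scoped Classical

/-- The orientation induced by an oriented room (R, s) on the wall obtained
by deleting the node v of R: with the nodes of R listed in increasing order,
if v is the i-th node (1-indexed) then the induced orientation is (−1)ⁱ·s. -/
def inducedOrient {α : Type*} [LinearOrder α] (R : Finset α) (s : ℤ) (v : α) : ℤ :=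
  (-1) ^ ((R.filter fun u => u < v).card + 1) * s

/-- A coherently oriented d-oik: a multiset of rooms (d-element subsets of α)
each carrying an orientation ±1, such that every wall (a (d−1)-subset of some
room) receives induced orientation +1 from exactly half of the oriented rooms
containing it. -/
def IsCoherentOik (α : Type*) [LinearOrder α] (d : ℕ)
    (OR : Multiset (Finset α × ℤ)) : Prop :=
  (∀ x ∈ OR, x.1.card = d ∧ (x.2 = 1 ∨ x.2 = -1)) ∧
  ∀ W : Finset α, W.card = d - 1 →
    OR.countP (fun x => W ⊆ x.1 ∧ ∃ v ∈ x.1, v ∉ W ∧ inducedOrient x.1 x.2 v = 1) =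
    OR.countP (fun x => W ⊆ x.1 ∧ ∃ v ∈ x.1, v ∉ W ∧ inducedOrient x.1 x.2 v = -1)

section helpers

lemma countP_eq_sum_toFinset {α : Type*} [DecidableEq α] (M : Multiset α)
    (p : α → Prop) [DecidablePred p] :
    M.countP p = ∑ a ∈ M.toFinset, if p a then M.count a else 0 := by
  rw [Multiset.countP_eq_card_filter, ← Multiset.toFinset_sum_count_eq (M.filter p)]
  rw [Finset.sum_subset (Multiset.toFinset_subset.2 (Multiset.subset_of_le (Multiset.filter_le p M)))
    (fun x _ hnx => Multiset.count_eq_zero_of_notMem (fun hm => hnx (Multiset.mem_toFinset.2 hm)))]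
  exact Finset.sum_congr rfl (fun a _ => Multiset.count_filter)

lemma countP_irrel {α : Type*} (M : Multiset α) (p q : α → Prop)
    [DecidablePred p] [DecidablePred q] (hpq : ∀ a, p a ↔ q a) :
    M.countP p = M.countP q :=
  Multiset.countP_congr rfl (fun x _ => propext (hpq x))

lemma countP_inst_irrel {α : Type*} (M : Multiset α) (p : α → Prop)
    (i1 i2 : DecidablePred p) :
    @Multiset.countP α p i1 M = @Multiset.countP α p i2 M := by
  have h : i1 = i2 := funext fun a => Subsingleton.elim _ _
  rw [h]

lemma unit_mul_iff {u x ι : ℤ} (hu : u = 1 ∨ u = -1) : u * x = ι ↔ x = u * ι := by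
  rcases hu with rfl | rfl <;> constructor <;> intro h <;> omega

lemma pair_collapse (p : ℤ → Prop) [DecidablePred p] (g : ℤ → ℕ) (s : ℤ)
    (hs : s = 1 ∨ s = -1) :
    ∑ t ∈ ({1, -1} : Finset ℤ), (if p t then (if s = t then g t else 0) else 0)
      = if p s then g s else 0 := by
  rw [Finset.sum_pair (by norm_num : (1:ℤ) ≠ -1)]
  rcases hs with rfl | rfl <;> norm_num

lemma sgn_prod_pm {γ : Type*} (s : Finset γ) (ε : γ → Bool) :
    (∏ p ∈ s, (if ε p then (1:ℤ) else -1)) = 1 ∨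
      (∏ p ∈ s, (if ε p then (1:ℤ) else -1)) = -1 := by
  refine Finset.prod_induction _ (fun z => z = 1 ∨ z = -1) ?_ (Or.inl rfl) ?_
  · rintro a b (rfl|rfl) (rfl|rfl) <;> norm_num
  · intro p _; cases ε p <;> simp

lemma neg_one_pow_pm (n : ℕ) : ((-1 : ℤ)) ^ n = 1 ∨ ((-1 : ℤ)) ^ n = -1 := by
  rcases Nat.even_or_odd n with hn | hn
  · exact Or.inl hn.neg_one_pow
  · exact Or.inr hn.neg_one_pow

lemma sum_wall {β : Type*} [DecidableEq β] (M : Multiset (Finset β × ℤ))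
    (P : Finset β × ℤ → Prop) [DecidablePred P] (B : Finset β) (Vc : Finset β)
    (hVc : ∀ w ∈ Vc, w ∉ B)
    (hstruct : ∀ x ∈ M.toFinset, P x → ∃ w ∈ Vc, x.1 = insert w B ∧ (x.2 = 1 ∨ x.2 = -1)) :
    M.countP P = ∑ w ∈ Vc, ∑ t ∈ ({1, -1} : Finset ℤ),
      if P (insert w B, t) then M.count (insert w B, t) else 0 := by
  rw [countP_eq_sum_toFinset]
  set F : Finset β × ℤ → ℕ := fun a => if P a then M.count a else 0 with hF
  set A : Finset (Finset β × ℤ) := (Vc ×ˢ ({1,-1} : Finset ℤ)).image (fun z => (insert z.1 B, z.2)) with hA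
  have h1 : ∑ a ∈ M.toFinset, F a = ∑ a ∈ M.toFinset ∪ A, F a := by
    apply Finset.sum_subset Finset.subset_union_left
    intro x _ hnx
    simp only [hF]
    rw [Multiset.count_eq_zero_of_notMem (fun hm => hnx (Multiset.mem_toFinset.2 hm))]
    simp
  have h2 : ∑ a ∈ A, F a = ∑ a ∈ M.toFinset ∪ A, F a := by
    apply Finset.sum_subset Finset.subset_union_right
    intro x hx hnx
    simp only [hF]
    split_ifs with hP
    · exfalso
      rcases Finset.mem_union.1 hx with hx' | hx'
      · obtain ⟨w, hwVc, hx1, hx2⟩ := hstruct x hx' hP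
        refine hnx (Finset.mem_image.2 ⟨(w, x.2), Finset.mem_product.2 ⟨hwVc, ?_⟩, ?_⟩)
        · rcases hx2 with h | h <;> simp [h]
        · rw [← hx1]
      · exact hnx hx'
    · rfl
  have hinj : ∀ z ∈ Vc ×ˢ ({1,-1} : Finset ℤ), ∀ z' ∈ Vc ×ˢ ({1,-1} : Finset ℤ),
      (fun z => ((insert z.1 B : Finset β), z.2)) z = (fun z => ((insert z.1 B : Finset β), z.2)) z' → z = z' := by
    intro z hz z' hz' hzz
    simp only [Prod.mk.injEq] at hzz
    have hz1 : z.1 = z'.1 := by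
      have : z.1 ∈ insert z'.1 B := hzz.1 ▸ Finset.mem_insert_self z.1 B
      rcases Finset.mem_insert.1 this with h | h
      · exact h
      · exact absurd h (hVc z.1 (Finset.mem_product.1 hz).1)
    exact Prod.ext hz1 hzz.2
  rw [h1, ← h2, hA, Finset.sum_image hinj, Finset.sum_product]

variable {V : Type*} [LinearOrder V] {h : ℕ}

def fib (T : Finset (Fin h ×ₗ V)) (p : Fin h) : Finset V :=
  (T.filter fun x => (ofLex x).1 = p).image fun x => (ofLex x).2

lemma mem_fib {T : Finset (Fin h ×ₗ V)} {p : Fin h} {w : V} :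
    w ∈ fib T p ↔ toLex (p, w) ∈ T := by
  constructor
  · rintro hw
    simp only [fib, Finset.mem_image, Finset.mem_filter] at hw
    obtain ⟨x, ⟨hxT, hx1⟩, hx2⟩ := hw
    have hx : x = toLex (p, w) := by
      have : ofLex x = (p, w) := Prod.ext hx1 hx2
      simpa using congrArg toLex this
    rwa [hx] at hxT
  · intro hw
    simp only [fib, Finset.mem_image, Finset.mem_filter]
    exact ⟨toLex (p, w), ⟨hw, rfl⟩, rfl⟩

lemma card_fib (T : Finset (Fin h ×ₗ V)) (p : Fin h) :
    (fib T p).card = (T.filter fun x => (ofLex x).1 = p).card := by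
  apply Finset.card_image_of_injOn
  intro x hx y hy hxy
  simp only [Finset.coe_filter, Set.mem_setOf_eq] at hx hy
  have : ofLex x = ofLex y := Prod.ext (hx.2.trans hy.2.symm) hxy
  simpa using congrArg toLex this

lemma sum_card_fib (T : Finset (Fin h ×ₗ V)) :
    T.card = ∑ p, (fib T p).card := by
  rw [Finset.card_eq_sum_card_fiberwise (f := fun x => (ofLex x).1) (t := Finset.univ)
    (fun x _ => Finset.mem_univ _)]
  exact Finset.sum_congr rfl (fun p _ => (card_fib T p).symm)

lemma fib_mono {T T' : Finset (Fin h ×ₗ V)} (hsub : T ⊆ T') (p : Fin h) :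
    fib T p ⊆ fib T' p := fun w hw => mem_fib.2 (hsub (mem_fib.1 hw))

lemma fib_insert_self (T : Finset (Fin h ×ₗ V)) (q : Fin h) (w : V) :
    fib (insert (toLex (q, w)) T) q = insert w (fib T q) := by
  ext z
  rw [mem_fib, Finset.mem_insert, Finset.mem_insert, mem_fib]
  simp

lemma fib_insert_ne (T : Finset (Fin h ×ₗ V)) {p q : Fin h} (hpq : p ≠ q) (w : V) :
    fib (insert (toLex (q, w)) T) p = fib T p := by
  ext z
  rw [mem_fib, Finset.mem_insert, mem_fib]
  refine or_iff_right (fun hc => hpq ?_)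
  have := congrArg (fun x => (ofLex x).1) hc
  simpa using this

lemma fib_filter (T : Finset (Fin h ×ₗ V)) (q : Fin h) (P : V → Prop) [DecidablePred P] :
    (fib T q).filter P = fib (T.filter fun x => P (ofLex x).2) q := by
  ext w
  rw [Finset.mem_filter, mem_fib, mem_fib, Finset.mem_filter]
  exact Iff.rfl

lemma card_lt_split (T : Finset (Fin h ×ₗ V)) (q : Fin h) (w : V) :
    (T.filter fun u => u < toLex (q, w)).card
      = (T.filter fun u => (ofLex u).1 < q).card
        + ((fib T q).filter fun u => u < w).card := by
  have h1 : (T.filter fun u => u < toLex (q, w))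
      = (T.filter fun u => (ofLex u).1 < q) ∪
        (T.filter fun u => (ofLex u).1 = q ∧ (ofLex u).2 < w) := by
    rw [← Finset.filter_or]
    apply Finset.filter_congr
    intro u _
    constructor
    · intro hu
      have := (Prod.Lex.lt_iff : toLex (ofLex u) < toLex (q, w) ↔ _).1 (by simpa using hu)
      simpa using this
    · intro hu
      have : toLex (ofLex u) < toLex (q, w) := (Prod.Lex.lt_iff : toLex (ofLex u) < toLex (q, w) ↔ _).2 (by simpa using hu)
      simpa using this
  have h2 : ((fib T q).filter fun u => u < w).card
      = (T.filter fun u => (ofLex u).1 = q ∧ (ofLex u).2 < w).card := by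
    rw [fib_filter, card_fib]
    congr 1
    rw [Finset.filter_filter]
    apply Finset.filter_congr
    intro u _
    tauto
  rw [h1, Finset.card_union_of_disjoint, h2]
  rw [Finset.disjoint_left]
  intro u hu1 hu2
  rw [Finset.mem_filter] at hu1 hu2
  exact absurd hu2.2.1 (ne_of_lt hu1.2)

end helpers

/-- If each oik 𝓡_p of an oik family is coherently oriented by σ_p, then the
oik-sum, with nodes of [h]×V ordered lexicographically and each summed room
R₁ ⊎ ⋯ ⊎ R_h oriented by the product Π_p σ_p(R_p), is coherently oriented:
here S is the multiset of oriented rooms (T, s) of the sum, where (T, s)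
occurs once for every choice of oriented rooms (R_p, σ_p) ∈ OR p whose fibers
compose to T and whose signs have product s. -/
theorem stmt_15 {V : Type*} [LinearOrder V] (h : ℕ) (hh : 0 < h)
    (d : Fin h → ℕ) (hd : ∀ p, 2 ≤ d p)
    (OR : Fin h → Multiset (Finset V × ℤ))
    (hcoh : ∀ p, IsCoherentOik V (d p) (OR p))
    (S : Multiset (Finset (Fin h ×ₗ V) × ℤ))
    (hS : ∀ (T : Finset (Fin h ×ₗ V)) (s : ℤ),
      S.count (T, s) = ∑ ε : Fin h → Bool,
        if (∏ p, (if ε p then (1 : ℤ) else -1)) = s then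
          ∏ p, (OR p).count
            (((T.filter fun x => (ofLex x).1 = p).image fun x => (ofLex x).2),
              if ε p then 1 else -1)
        else 0) :
    IsCoherentOik (Fin h ×ₗ V) (∑ p, d p) S := by
  have hS' : ∀ (T : Finset (Fin h ×ₗ V)) (s : ℤ),
      S.count (T, s) = ∑ ε : Fin h → Bool,
        if (∏ p, (if ε p then (1 : ℤ) else -1)) = s then
          ∏ p, (OR p).count (fib T p, if ε p then 1 else -1)
        else 0 := hS
  clear hS
  have hDpos : 0 < ∑ p, d p := by
    calc 0 < 2 := by norm_num
    _ ≤ d ⟨0, hh⟩ := hd _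
    _ ≤ ∑ p, d p := Finset.single_le_sum (fun _ _ => Nat.zero_le _) (Finset.mem_univ _)
  have hmem : ∀ (T : Finset (Fin h ×ₗ V)) (s : ℤ), S.count (T, s) ≠ 0 →
      ∃ ε : Fin h → Bool, (∏ p, (if ε p then (1:ℤ) else -1)) = s ∧
        ∀ p, (fib T p, (if ε p then (1:ℤ) else -1)) ∈ OR p := by
    intro T s hc
    rw [hS' T s] at hc
    obtain ⟨ε, _, hε⟩ := Finset.exists_ne_zero_of_sum_ne_zero hc
    by_cases hcond : (∏ p, (if ε p then (1 : ℤ) else -1)) = s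
    · refine ⟨ε, hcond, fun p => ?_⟩
      rw [if_pos hcond] at hε
      have := (Finset.prod_ne_zero_iff.1 hε) p (Finset.mem_univ p)
      exact Multiset.count_ne_zero.1 this
    · rw [if_neg hcond] at hε
      exact absurd rfl hε
  have hcard : ∀ (T : Finset (Fin h ×ₗ V)) (s : ℤ), S.count (T, s) ≠ 0 →
      ∀ p, (fib T p).card = d p := by
    intro T s hc p
    obtain ⟨ε, _, hall⟩ := hmem T s hc
    exact ((hcoh p).1 _ (hall p)).1
  constructor
  · rintro ⟨T, s⟩ hx
    have hc : S.count (T, s) ≠ 0 := Multiset.count_ne_zero.2 hx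
    constructor
    · show T.card = ∑ p, d p
      rw [sum_card_fib T]
      exact Finset.sum_congr rfl (fun p _ => hcard T s hc p)
    · obtain ⟨ε, hprod, _⟩ := hmem T s hc
      show s = 1 ∨ s = -1
      rw [← hprod]
      exact sgn_prod_pm Finset.univ ε
  · intro W hW
    by_cases hbad : ∀ p, (fib W p).card ≤ d p
    case neg =>
      push_neg at hbad
      obtain ⟨p₀, hp₀⟩ := hbad
      have key : ∀ (a : Finset (Fin h ×ₗ V) × ℤ), a ∈ S → ¬ (W ⊆ a.1) := by
        rintro ⟨T, s⟩ ha hsub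
        have hc := Multiset.count_ne_zero.2 ha
        have h1 := hcard T s hc p₀
        have hsub' : W ⊆ T := hsub
        have hle := Finset.card_le_card (fib_mono hsub' p₀)
        omega
      have z1 : S.countP
          (fun x => W ⊆ x.1 ∧ ∃ v ∈ x.1, v ∉ W ∧ inducedOrient x.1 x.2 v = 1) = 0 :=
        Multiset.countP_eq_zero.2 fun a ha hp => key a ha hp.1
      have z2 : S.countP
          (fun x => W ⊆ x.1 ∧ ∃ v ∈ x.1, v ∉ W ∧ inducedOrient x.1 x.2 v = -1) = 0 :=
        Multiset.countP_eq_zero.2 fun a ha hp => key a ha hp.1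
      exact (countP_inst_irrel S _ _ _).trans (z1.trans (z2.symm.trans (countP_inst_irrel S _ _ _)))
    case pos =>
      have hsum0 := sum_card_fib W
      have hsum : (∑ p, (fib W p).card) + 1 = ∑ p, d p := by omega
      obtain ⟨q₀, hq₀⟩ : ∃ q₀, (fib W q₀).card < d q₀ := by
        by_contra hc
        push_neg at hc
        have h1 : ∑ p, d p ≤ ∑ p, (fib W p).card := Finset.sum_le_sum (fun p _ => hc p)
        omega
      have herase1 : (fib W q₀).card + ∑ p ∈ Finset.univ.erase q₀, (fib W p).card
          = ∑ p, (fib W p).card :=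
        Finset.add_sum_erase _ (fun p => (fib W p).card) (Finset.mem_univ q₀)
      have herase2 : d q₀ + ∑ p ∈ Finset.univ.erase q₀, d p = ∑ p, d p :=
        Finset.add_sum_erase _ d (Finset.mem_univ q₀)
      have heraseLe : ∑ p ∈ Finset.univ.erase q₀, (fib W p).card
          ≤ ∑ p ∈ Finset.univ.erase q₀, d p :=
        Finset.sum_le_sum (fun p _ => hbad p)
      have hq1 : (fib W q₀).card + 1 = d q₀ := by omega
      have hq2 : ∀ p, p ≠ q₀ → (fib W p).card = d p := by
        intro p hp
        have hne : ∑ p ∈ Finset.univ.erase q₀, (fib W p).card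
            = ∑ p ∈ Finset.univ.erase q₀, d p := by omega
        exact (Finset.sum_eq_sum_iff_of_le (fun p _ => hbad p)).1 hne p
          (Finset.mem_erase.2 ⟨hp, Finset.mem_univ p⟩)
      set Vc : Finset V := ((OR q₀).toFinset.sup fun x => x.1) \ fib W q₀ with hVcdef
      have hVcWq : ∀ w ∈ Vc, w ∉ fib W q₀ := fun w hw => (Finset.mem_sdiff.1 hw).2
      have hVcW : ∀ w ∈ Vc, toLex (q₀, w) ∉ W := fun w hw hmem' => hVcWq w hw (mem_fib.2 hmem')
      -- structure of rooms of S containing the wall W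
      have hstructS : ∀ (ι : ℤ) (x : Finset (Fin h ×ₗ V) × ℤ), x ∈ S.toFinset →
          (W ⊆ x.1 ∧ ∃ v ∈ x.1, v ∉ W ∧ inducedOrient x.1 x.2 v = ι) →
          ∃ v ∈ Vc.image (fun w => toLex (q₀, w)), x.1 = insert v W ∧ (x.2 = 1 ∨ x.2 = -1) := by
        intro ι x hx hP
        have hc : S.count (x.1, x.2) ≠ 0 := by
          rw [Prod.mk.eta]
          exact Multiset.count_ne_zero.2 (Multiset.mem_toFinset.1 hx)
        obtain ⟨ε, hprod, hall⟩ := hmem x.1 x.2 hc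
        have hcardp : ∀ p, (fib x.1 p).card = d p := hcard x.1 x.2 hc
        have hsign : x.2 = 1 ∨ x.2 = -1 := by rw [← hprod]; exact sgn_prod_pm _ ε
        obtain ⟨hWsub, v, hvx, hvW, -⟩ := hP
        have hcardx : x.1.card = W.card + 1 := by
          have h1 : x.1.card = ∑ p, d p := by
            rw [sum_card_fib x.1]
            exact Finset.sum_congr rfl (fun p _ => hcardp p)
          omega
        have hx1 : insert v W = x.1 :=
          Finset.eq_of_subset_of_card_le (Finset.insert_subset hvx hWsub)
            (by rw [Finset.card_insert_of_notMem hvW]; omega)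
        have hfst : (ofLex v).1 = q₀ := by
          by_contra hne
          have hnm : (ofLex v).2 ∉ fib W (ofLex v).1 := fun hmm => hvW (mem_fib.1 hmm)
          have hfib : fib x.1 (ofLex v).1 = insert (ofLex v).2 (fib W (ofLex v).1) := by
            rw [← hx1]
            exact fib_insert_self W (ofLex v).1 (ofLex v).2
          have hcv := hcardp (ofLex v).1
          rw [hfib, Finset.card_insert_of_notMem hnm] at hcv
          have := hq2 (ofLex v).1 hne
          omega
        have hveq : v = toLex (q₀, (ofLex v).2) := by rw [← hfst]; exact rfl
        have hwVc : (ofLex v).2 ∈ Vc := by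
          rw [hVcdef]
          refine Finset.mem_sdiff.2 ⟨?_, ?_⟩
          · refine Finset.mem_sup.2 ⟨(fib x.1 q₀, if ε q₀ then (1:ℤ) else -1),
              Multiset.mem_toFinset.2 (hall q₀), ?_⟩
            exact mem_fib.2 (by rw [← hveq]; exact hvx)
          · exact fun hmm => hvW (by rw [hveq]; exact mem_fib.1 hmm)
        exact ⟨v, Finset.mem_image.2 ⟨(ofLex v).2, hwVc, hveq.symm⟩, hx1.symm, hsign⟩
      -- structure of rooms of OR q₀ containing the wall (fib W q₀)
      have hWqcard : (fib W q₀).card = d q₀ - 1 := by omega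
      have hstructO : ∀ (κ : ℤ) (x : Finset V × ℤ), x ∈ (OR q₀).toFinset →
          (fib W q₀ ⊆ x.1 ∧ ∃ v ∈ x.1, v ∉ fib W q₀ ∧ inducedOrient x.1 x.2 v = κ) →
          ∃ w ∈ Vc, x.1 = insert w (fib W q₀) ∧ (x.2 = 1 ∨ x.2 = -1) := by
        intro κ x hx hP
        obtain ⟨hcx, hsx⟩ := (hcoh q₀).1 x (Multiset.mem_toFinset.1 hx)
        obtain ⟨hWsub, v, hvx, hvW', -⟩ := hP
        have hins : insert v (fib W q₀) = x.1 :=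
          Finset.eq_of_subset_of_card_le (Finset.insert_subset hvx hWsub)
            (by rw [Finset.card_insert_of_notMem hvW']; omega)
        exact ⟨v, Finset.mem_sdiff.2 ⟨Finset.mem_sup.2 ⟨x, hx, hvx⟩, hvW'⟩, hins.symm, hsx⟩
      set Q2 : ℤ → ℕ := fun κ => ∑ w ∈ Vc, ∑ t ∈ ({1, -1} : Finset ℤ),
        (if inducedOrient (insert w (fib W q₀)) t w = κ
         then (OR q₀).count (insert w (fib W q₀), t) else 0) with hQ2
      have hQ : ∀ (κ : ℤ), (OR q₀).countP
          (fun x => fib W q₀ ⊆ x.1 ∧ ∃ v ∈ x.1, v ∉ fib W q₀ ∧ inducedOrient x.1 x.2 v = κ)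
          = Q2 κ := by
        intro κ
        rw [hQ2]
        rw [sum_wall (OR q₀) _ (fib W q₀) Vc hVcWq (hstructO κ)]
        refine Finset.sum_congr rfl (fun w hw => Finset.sum_congr rfl (fun t _ => ?_))
        refine if_congr ⟨?_, ?_⟩ rfl rfl
        · rintro ⟨-, u, hu, hun, hind⟩
          rcases Finset.mem_insert.1 hu with rfl | hu'
          · exact hind
          · exact absurd hu' hun
        · intro hind
          exact ⟨Finset.subset_insert _ _, w, Finset.mem_insert_self _ _, hVcWq w hw, hind⟩
      have hQsym : Q2 1 = Q2 (-1) := by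
        have h0 := (hcoh q₀).2 (fib W q₀) hWqcard
        have e1 : (OR q₀).countP
            (fun x => fib W q₀ ⊆ x.1 ∧ ∃ v ∈ x.1, v ∉ fib W q₀ ∧ inducedOrient x.1 x.2 v = 1)
            = (OR q₀).countP
            (fun x => fib W q₀ ⊆ x.1 ∧ ∃ v ∈ x.1, v ∉ fib W q₀ ∧ inducedOrient x.1 x.2 v = -1) :=
          (countP_inst_irrel _ _ _ _).trans (h0.trans (countP_inst_irrel _ _ _ _))
        exact (hQ 1).symm.trans (e1.trans (hQ (-1)))
      -- the main counting formula
      set K : ℤ → (Fin h → Bool) → ℕ := fun ι ε => ∑ w ∈ Vc,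
        (if inducedOrient (insert w (fib W q₀)) (if ε q₀ then (1:ℤ) else -1) w
            = ((-1 : ℤ) ^ (W.filter fun u => (ofLex u).1 < q₀).card
                * ∏ p ∈ Finset.univ.erase q₀, (if ε p then (1:ℤ) else -1)) * ι
        then (OR q₀).count (insert w (fib W q₀), if ε q₀ then (1:ℤ) else -1)
              * ∏ p ∈ Finset.univ.erase q₀, (OR p).count (fib W p, if ε p then (1:ℤ) else -1)
        else 0) with hK
      have hu : ∀ ε : Fin h → Bool,
          ((-1 : ℤ) ^ (W.filter fun u => (ofLex u).1 < q₀).card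
            * ∏ p ∈ Finset.univ.erase q₀, (if ε p then (1:ℤ) else -1)) = 1 ∨
          ((-1 : ℤ) ^ (W.filter fun u => (ofLex u).1 < q₀).card
            * ∏ p ∈ Finset.univ.erase q₀, (if ε p then (1:ℤ) else -1)) = -1 := by
        intro ε
        rcases neg_one_pow_pm ((W.filter fun u => (ofLex u).1 < q₀).card) with h1 | h1 <;>
          rcases sgn_prod_pm (Finset.univ.erase q₀) ε with h2 | h2 <;>
          rw [h1, h2] <;> norm_num
      have hfinalstep : ∀ (ι : ℤ), ∀ w ∈ Vc, ∀ ε : Fin h → Bool,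
          (if (W ⊆ insert (toLex (q₀, w)) W ∧ ∃ v ∈ insert (toLex (q₀, w)) W, v ∉ W ∧
              inducedOrient (insert (toLex (q₀, w)) W) (∏ p, (if ε p then (1:ℤ) else -1)) v = ι)
          then ∏ p, (OR p).count (fib (insert (toLex (q₀, w)) W) p, if ε p then (1:ℤ) else -1)
          else 0)
          = (if inducedOrient (insert w (fib W q₀)) (if ε q₀ then (1:ℤ) else -1) w
              = ((-1 : ℤ) ^ (W.filter fun u => (ofLex u).1 < q₀).card
                  * ∏ p ∈ Finset.univ.erase q₀, (if ε p then (1:ℤ) else -1)) * ι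
            then (OR q₀).count (insert w (fib W q₀), if ε q₀ then (1:ℤ) else -1)
                  * ∏ p ∈ Finset.univ.erase q₀, (OR p).count (fib W p, if ε p then (1:ℤ) else -1)
            else 0) := by
        intro ι w hw ε
        have hvnW : toLex (q₀, w) ∉ W := hVcW w hw
        have hcsplit : ((insert (toLex (q₀, w)) W).filter fun u => u < toLex (q₀, w)).card
            = (W.filter fun u => (ofLex u).1 < q₀).card
              + ((fib W q₀).filter fun u => u < w).card := by
          rw [Finset.filter_insert, if_neg (lt_irrefl _), card_lt_split]
        have hc2 : ((insert w (fib W q₀)).filter fun u => u < w).card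
            = ((fib W q₀).filter fun u => u < w).card := by
          rw [Finset.filter_insert, if_neg (lt_irrefl _)]
        have hsplitprod : (if ε q₀ then (1:ℤ) else -1)
            * ∏ p ∈ Finset.univ.erase q₀, (if ε p then (1:ℤ) else -1)
            = ∏ p, (if ε p then (1:ℤ) else -1) :=
          Finset.mul_prod_erase _ (fun p => if ε p then (1:ℤ) else -1) (Finset.mem_univ q₀)
        have hindeq : inducedOrient (insert (toLex (q₀, w)) W)
              (∏ p, (if ε p then (1:ℤ) else -1)) (toLex (q₀, w))
            = ((-1 : ℤ) ^ (W.filter fun u => (ofLex u).1 < q₀).card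
                * ∏ p ∈ Finset.univ.erase q₀, (if ε p then (1:ℤ) else -1))
              * inducedOrient (insert w (fib W q₀)) (if ε q₀ then (1:ℤ) else -1) w := by
          unfold inducedOrient
          rw [hcsplit, hc2, ← hsplitprod]
          have hAB : (W.filter fun u => (ofLex u).1 < q₀).card
              + ((fib W q₀).filter fun u => u < w).card + 1
              = (W.filter fun u => (ofLex u).1 < q₀).card
                + (((fib W q₀).filter fun u => u < w).card + 1) := by omega
          rw [hAB, pow_add]
          ring
        have hcond : (W ⊆ insert (toLex (q₀, w)) W ∧ ∃ v ∈ insert (toLex (q₀, w)) W, v ∉ W ∧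
              inducedOrient (insert (toLex (q₀, w)) W) (∏ p, (if ε p then (1:ℤ) else -1)) v = ι)
            ↔ (inducedOrient (insert w (fib W q₀)) (if ε q₀ then (1:ℤ) else -1) w
              = ((-1 : ℤ) ^ (W.filter fun u => (ofLex u).1 < q₀).card
                  * ∏ p ∈ Finset.univ.erase q₀, (if ε p then (1:ℤ) else -1)) * ι) := by
          rw [← unit_mul_iff (hu ε), ← hindeq]
          constructor
          · rintro ⟨-, u, hu', hun, hind⟩
            rcases Finset.mem_insert.1 hu' with rfl | hu''
            · exact hind
            · exact absurd hu'' hun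
          · intro hind
            exact ⟨Finset.subset_insert _ _, _, Finset.mem_insert_self _ _, hvnW, hind⟩
        have hval : ∏ p, (OR p).count (fib (insert (toLex (q₀, w)) W) p, if ε p then (1:ℤ) else -1)
            = (OR q₀).count (insert w (fib W q₀), if ε q₀ then (1:ℤ) else -1)
              * ∏ p ∈ Finset.univ.erase q₀, (OR p).count (fib W p, if ε p then (1:ℤ) else -1) := by
          rw [← Finset.mul_prod_erase Finset.univ _ (Finset.mem_univ q₀), fib_insert_self]
          congr 1
          refine Finset.prod_congr rfl (fun p hp => ?_)
          rw [fib_insert_ne W (Finset.mem_erase.1 hp).1]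
        exact if_congr hcond hval rfl
      have hiota : ∀ (ι : ℤ),
          S.countP (fun x => W ⊆ x.1 ∧ ∃ v ∈ x.1, v ∉ W ∧ inducedOrient x.1 x.2 v = ι)
          = ∑ ε : Fin h → Bool, K ι ε := by
        intro ι
        have hVcW' : ∀ v ∈ Vc.image (fun w => toLex (q₀, w)), v ∉ W := by
          intro v hv
          obtain ⟨w, hw, rfl⟩ := Finset.mem_image.1 hv
          exact hVcW w hw
        have hinj2 : ∀ w ∈ Vc, ∀ w' ∈ Vc,
            (fun w => toLex (q₀, w)) w = (fun w => toLex (q₀, w)) w' → w = w' := by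
          intro w _ w' _ hcc
          have := congrArg (fun x => (ofLex x).2) hcc
          simpa using this
        rw [sum_wall S _ W (Vc.image fun w => toLex (q₀, w)) hVcW' (hstructS ι),
          Finset.sum_image hinj2]
        have hwstep : ∀ w ∈ Vc, ∀ t : ℤ,
            (if (W ⊆ insert (toLex (q₀, w)) W ∧ ∃ v ∈ insert (toLex (q₀, w)) W, v ∉ W ∧
                inducedOrient (insert (toLex (q₀, w)) W) t v = ι)
            then S.count (insert (toLex (q₀, w)) W, t) else 0)
            = ∑ ε : Fin h → Bool,
              (if (W ⊆ insert (toLex (q₀, w)) W ∧ ∃ v ∈ insert (toLex (q₀, w)) W, v ∉ W ∧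
                  inducedOrient (insert (toLex (q₀, w)) W) t v = ι)
              then (if (∏ p, (if ε p then (1:ℤ) else -1)) = t
                then ∏ p, (OR p).count (fib (insert (toLex (q₀, w)) W) p,
                  if ε p then (1:ℤ) else -1)
                else 0)
              else 0) := by
          intro w hw t
          split_ifs with hp
          · exact hS' _ t
          · simp
        trans (∑ w ∈ Vc, ∑ t ∈ ({1, -1} : Finset ℤ), ∑ ε : Fin h → Bool,
          (if (W ⊆ insert (toLex (q₀, w)) W ∧ ∃ v ∈ insert (toLex (q₀, w)) W, v ∉ W ∧
              inducedOrient (insert (toLex (q₀, w)) W) t v = ι)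
          then (if (∏ p, (if ε p then (1:ℤ) else -1)) = t
            then ∏ p, (OR p).count (fib (insert (toLex (q₀, w)) W) p, if ε p then (1:ℤ) else -1)
            else 0)
          else 0))
        · exact Finset.sum_congr rfl fun w hw => Finset.sum_congr rfl fun t _ => hwstep w hw t
        trans (∑ w ∈ Vc, ∑ ε : Fin h → Bool,
          (if (W ⊆ insert (toLex (q₀, w)) W ∧ ∃ v ∈ insert (toLex (q₀, w)) W, v ∉ W ∧
              inducedOrient (insert (toLex (q₀, w)) W) (∏ p, (if ε p then (1:ℤ) else -1)) v = ι)
          then ∏ p, (OR p).count (fib (insert (toLex (q₀, w)) W) p, if ε p then (1:ℤ) else -1)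
          else 0))
        · refine Finset.sum_congr rfl fun w hw => ?_
          rw [Finset.sum_comm]
          refine Finset.sum_congr rfl fun ε _ => ?_
          exact pair_collapse _ _ _ (sgn_prod_pm Finset.univ ε)
        simp only [hK]
        exact Eq.trans (Finset.sum_congr rfl fun w hw =>
          Finset.sum_congr rfl fun ε _ => hfinalstep ι w hw ε) Finset.sum_comm
      -- the flip involution and pairing
      set flp : (Fin h → Bool) → (Fin h → Bool) := fun ε => Function.update ε q₀ (!(ε q₀)) with hflp
      have hflpq : ∀ ε, flp ε q₀ = !(ε q₀) := fun ε => Function.update_self _ _ _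
      have hflpne : ∀ (ε : Fin h → Bool) p, p ≠ q₀ → flp ε p = ε p :=
        fun ε p hp => Function.update_of_ne hp _ _
      have hflpbij : Function.Bijective flp := by
        apply Function.Involutive.bijective
        intro ε
        funext p
        by_cases hp : p = q₀
        · subst hp
          rw [hflpq, hflpq, Bool.not_not]
        · rw [hflpne _ _ hp, hflpne _ _ hp]
      have hKflip : ∀ (ι : ℤ) (ε : Fin h → Bool), K ι (flp ε) = ∑ w ∈ Vc,
          (if inducedOrient (insert w (fib W q₀)) (if !(ε q₀) then (1:ℤ) else -1) w
              = ((-1 : ℤ) ^ (W.filter fun u => (ofLex u).1 < q₀).card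
                  * ∏ p ∈ Finset.univ.erase q₀, (if ε p then (1:ℤ) else -1)) * ι
          then (OR q₀).count (insert w (fib W q₀), if !(ε q₀) then (1:ℤ) else -1)
                * ∏ p ∈ Finset.univ.erase q₀, (OR p).count (fib W p, if ε p then (1:ℤ) else -1)
          else 0) := by
        intro ι ε
        simp only [hK]
        refine Finset.sum_congr rfl fun w hw => ?_
        rw [hflpq]
        have h1 : ∏ p ∈ Finset.univ.erase q₀, (if flp ε p then (1:ℤ) else -1)
            = ∏ p ∈ Finset.univ.erase q₀, (if ε p then (1:ℤ) else -1) :=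
          Finset.prod_congr rfl fun p hp => by rw [hflpne ε p (Finset.mem_erase.1 hp).1]
        have h2 : ∏ p ∈ Finset.univ.erase q₀, (OR p).count (fib W p, if flp ε p then (1:ℤ) else -1)
            = ∏ p ∈ Finset.univ.erase q₀, (OR p).count (fib W p, if ε p then (1:ℤ) else -1) :=
          Finset.prod_congr rfl fun p hp => by rw [hflpne ε p (Finset.mem_erase.1 hp).1]
        rw [h1, h2]
      have hpairs : ∀ (ι : ℤ) (ε : Fin h → Bool), K ι ε + K ι (flp ε)
          = Q2 (((-1 : ℤ) ^ (W.filter fun u => (ofLex u).1 < q₀).card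
              * ∏ p ∈ Finset.univ.erase q₀, (if ε p then (1:ℤ) else -1)) * ι)
            * ∏ p ∈ Finset.univ.erase q₀, (OR p).count (fib W p, if ε p then (1:ℤ) else -1) := by
        intro ι ε
        rw [hKflip ι ε]
        simp only [hK, hQ2]
        rw [← Finset.sum_add_distrib, Finset.sum_mul]
        refine Finset.sum_congr rfl fun w hw => ?_
        rw [Finset.sum_mul, Finset.sum_pair (by norm_num : (1:ℤ) ≠ -1), ite_mul, ite_mul,
          zero_mul]
        cases hb : ε q₀
        · simp only [hb, Bool.not_false, Bool.false_eq_true, if_true, if_false]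
          exact add_comm _ _
        · simp only [hb, Bool.not_true, Bool.false_eq_true, if_true, if_false]
      have hflipsum : ∀ (ι : ℤ), ∑ ε : Fin h → Bool, K ι (flp ε) = ∑ ε : Fin h → Bool, K ι ε :=
        fun ι => Fintype.sum_bijective flp hflpbij _ _ (fun ε => rfl)
      have hpairs2 : ∀ ε : Fin h → Bool, K 1 ε + K 1 (flp ε) = K (-1) ε + K (-1) (flp ε) := by
        intro ε
        rw [hpairs 1 ε, hpairs (-1) ε]
        congr 1
        rcases hu ε with h1 | h1 <;> rw [h1]
        · rw [one_mul, one_mul]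
          exact hQsym
        · rw [show ((-1:ℤ)) * 1 = -1 by norm_num, show ((-1:ℤ)) * -1 = 1 by norm_num]
          exact hQsym.symm
      have h2N : (∑ ε : Fin h → Bool, K 1 ε) + (∑ ε : Fin h → Bool, K 1 ε)
          = (∑ ε : Fin h → Bool, K (-1) ε) + (∑ ε : Fin h → Bool, K (-1) ε) := by
        have e1 : (∑ ε : Fin h → Bool, K 1 ε) + (∑ ε : Fin h → Bool, K 1 (flp ε))
            = (∑ ε : Fin h → Bool, K (-1) ε) + (∑ ε : Fin h → Bool, K (-1) (flp ε)) := by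
          rw [← Finset.sum_add_distrib, ← Finset.sum_add_distrib]
          exact Finset.sum_congr rfl fun ε _ => hpairs2 ε
        rw [hflipsum 1, hflipsum (-1)] at e1
        exact e1
      have hfin : ∑ ε : Fin h → Bool, K 1 ε = ∑ ε : Fin h → Bool, K (-1) ε := by omega
      have main : S.countP
          (fun x => W ⊆ x.1 ∧ ∃ v ∈ x.1, v ∉ W ∧ inducedOrient x.1 x.2 v = 1)
          = S.countP
          (fun x => W ⊆ x.1 ∧ ∃ v ∈ x.1, v ∉ W ∧ inducedOrient x.1 x.2 v = -1) :=
        (hiota 1).trans (hfin.trans (hiota (-1)).symm)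
      exact (countP_inst_irrel S _ _ _).trans (main.trans (countP_inst_irrel S _ _ _))
end

section
/- Let 𝓡_p be a d_p-oik on V for p ∈ [h] with |V| = Σ_p d_p. Then the number of ordered room partitions (R₁,...,R_h) with R_p ∈ 𝓡_p and ∪_p R_p = V is even. -/
open scoped Classical

/-- A d-dimensional Euler complex (d-oik) on V. -/
def IsOik (V : Type*) [DecidableEq V] (d : ℕ) (R : Multiset (Finset V)) : Prop :=
  (∀ r ∈ R, r.card = d) ∧
  ∀ W : Finset V, W.card = d - 1 → Even (R.countP fun r => W ⊆ r)

namespace Stmt16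

variable {V : Type*} [Fintype V] [DecidableEq V]

/-- Boundary operator on GF(2)-valued set functions. -/
def bd (f : Finset V → ZMod 2) (W : Finset V) : ZMod 2 :=
  ∑ v ∈ Wᶜ, f (insert v W)

/-- Disjoint-union convolution (exterior product over GF(2)). -/
def conv (f g : Finset V → ZMod 2) (S : Finset V) : ZMod 2 :=
  ∑ A ∈ S.powerset, f A * g (S \ A)

/-- Iterated convolution. -/
def cprod : ∀ {n : ℕ}, (Fin n → Finset V → ZMod 2) → Finset V → ZMod 2
  | 0, _, S => if S = ∅ then 1 else 0
  | _ + 1, F, S => conv (F 0) (cprod fun i => F i.succ) S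

omit [Fintype V] in
lemma insert_sdiff_insert' {v : V} {W A : Finset V} (hv : v ∉ W) :
    insert v W \ insert v A = W \ A := by
  ext x
  simp only [Finset.mem_sdiff, Finset.mem_insert, not_or]
  constructor
  · rintro ⟨hx1 | hx2, hx3, hx4⟩
    · exact absurd hx1 hx3
    · exact ⟨hx2, hx4⟩
  · rintro ⟨hx, hxa⟩
    exact ⟨Or.inr hx, fun e => hv (e ▸ hx), hxa⟩

omit [Fintype V] in
lemma insert_sdiff_self_of_mem {v : V} {W A : Finset V} (hvW : v ∈ W) (hvA : v ∉ A) :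
    insert v (W \ insert v A) = W \ A := by
  ext x
  simp only [Finset.mem_insert, Finset.mem_sdiff, not_or]
  constructor
  · rintro (rfl | ⟨hx, _, hxa⟩)
    · exact ⟨hvW, hvA⟩
    · exact ⟨hx, hxa⟩
  · rintro ⟨hx, hxa⟩
    by_cases hxv : x = v
    · exact Or.inl hxv
    · exact Or.inr ⟨hx, hxv, hxa⟩

lemma bd_conv (f g : Finset V → ZMod 2) (W : Finset V) :
    bd (conv f g) W = conv (bd f) g W + conv f (bd g) W := by
  classical
  -- expand the LHS
  have hins : ∀ v ∈ Wᶜ,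
      conv f g (insert v W)
        = (∑ A ∈ W.powerset, f A * g (insert v (W \ A)))
          + ∑ A ∈ W.powerset, f (insert v A) * g (W \ A) := by
    intro v hv
    rw [Finset.mem_compl] at hv
    have hdisj : Disjoint W.powerset (W.powerset.image (insert v)) := by
      rw [Finset.disjoint_left]
      intro A hA hA'
      obtain ⟨B, _, rfl⟩ := Finset.mem_image.mp hA'
      exact hv (Finset.mem_powerset.mp hA (Finset.mem_insert_self v B))
    have hinj : ∀ x ∈ W.powerset, ∀ y ∈ W.powerset, insert v x = insert v y → x = y := by
      intro x hx y hy e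
      have hvx : v ∉ x := fun hvx => hv (Finset.mem_powerset.mp hx hvx)
      have hvy : v ∉ y := fun hvy => hv (Finset.mem_powerset.mp hy hvy)
      rw [← Finset.erase_insert hvx, ← Finset.erase_insert hvy, e]
    rw [conv, Finset.powerset_insert, Finset.sum_union hdisj, Finset.sum_image hinj]
    congr 1
    · refine Finset.sum_congr rfl fun A hA => ?_
      have hvA : v ∉ A := fun hvA => hv (Finset.mem_powerset.mp hA hvA)
      rw [Finset.insert_sdiff_of_notMem _ hvA]
    · refine Finset.sum_congr rfl fun A hA => ?_
      rw [insert_sdiff_insert' hv]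
  rw [bd, Finset.sum_congr rfl hins, Finset.sum_add_distrib, Finset.sum_comm, Finset.sum_comm (s := Wᶜ)]
  -- expand the RHS
  have hAc : ∀ A ∈ W.powerset, Aᶜ = Wᶜ ∪ (W \ A) := by
    intro A hA
    have := Finset.mem_powerset.mp hA
    ext x
    simp only [Finset.mem_compl, Finset.mem_union, Finset.mem_sdiff]
    constructor
    · intro hxA
      by_cases hx : x ∈ W
      exacts [Or.inr ⟨hx, hxA⟩, Or.inl hx]
    · rintro (hx | ⟨_, hxA⟩)
      exacts [fun hxA => hx (this hxA), hxA]
  have hWAc : ∀ A ∈ W.powerset, (W \ A)ᶜ = Wᶜ ∪ A := by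
    intro A hA
    have := Finset.mem_powerset.mp hA
    ext x
    simp only [Finset.mem_compl, Finset.mem_union, Finset.mem_sdiff, not_and, not_not]
    constructor
    · intro hx
      by_cases hxA : x ∈ A
      · exact Or.inr hxA
      · exact Or.inl fun hxW => hxA (hx hxW)
    · rintro (hx | hxA)
      · exact fun hxW => absurd hxW hx
      · exact fun _ => hxA
  have e1 : conv (bd f) g W
      = (∑ A ∈ W.powerset, ∑ v ∈ Wᶜ, f (insert v A) * g (W \ A))
        + ∑ A ∈ W.powerset, ∑ v ∈ W \ A, f (insert v A) * g (W \ A) := by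
    rw [conv, ← Finset.sum_add_distrib]
    refine Finset.sum_congr rfl fun A hA => ?_
    rw [bd, Finset.sum_mul, hAc A hA,
      Finset.sum_union (disjoint_compl_left.mono_right Finset.sdiff_subset)]
  have e2 : conv f (bd g) W
      = (∑ A ∈ W.powerset, ∑ v ∈ Wᶜ, f A * g (insert v (W \ A)))
        + ∑ A ∈ W.powerset, ∑ v ∈ A, f A * g (insert v (W \ A)) := by
    rw [conv, ← Finset.sum_add_distrib]
    refine Finset.sum_congr rfl fun A hA => ?_
    rw [bd, Finset.mul_sum, hWAc A hA,
      Finset.sum_union (disjoint_compl_left.mono_right (Finset.mem_powerset.mp hA))]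
  rw [e1, e2]
  -- the two extra terms cancel in characteristic two
  have hD : (∑ A ∈ W.powerset, ∑ v ∈ W \ A, f (insert v A) * g (W \ A))
      = ∑ A ∈ W.powerset, ∑ v ∈ A, f A * g (insert v (W \ A)) := by
    rw [Finset.sum_sigma', Finset.sum_sigma']
    refine Finset.sum_nbij' (fun p => ⟨insert p.2 p.1, p.2⟩) (fun p => ⟨p.1.erase p.2, p.2⟩)
      ?_ ?_ ?_ ?_ ?_
    · rintro ⟨A, v⟩ hp
      simp only [Finset.mem_sigma, Finset.mem_powerset] at hp ⊢
      obtain ⟨hA, hv⟩ := hp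
      rw [Finset.mem_sdiff] at hv
      exact ⟨Finset.insert_subset hv.1 hA, Finset.mem_insert_self _ _⟩
    · rintro ⟨A, v⟩ hp
      simp only [Finset.mem_sigma, Finset.mem_powerset] at hp ⊢
      obtain ⟨hA, hv⟩ := hp
      refine ⟨(Finset.erase_subset _ _).trans hA, Finset.mem_sdiff.mpr ⟨hA hv, Finset.notMem_erase _ _⟩⟩
    · rintro ⟨A, v⟩ hp
      simp only [Finset.mem_sigma, Finset.mem_powerset] at hp
      obtain ⟨hA, hv⟩ := hp
      rw [Finset.mem_sdiff] at hv
      simp only [Finset.erase_insert hv.2]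
    · rintro ⟨A, v⟩ hp
      simp only [Finset.mem_sigma, Finset.mem_powerset] at hp
      obtain ⟨hA, hv⟩ := hp
      simp only [Finset.insert_erase hv]
    · rintro ⟨A, v⟩ hp
      simp only [Finset.mem_sigma, Finset.mem_powerset] at hp
      obtain ⟨hA, hv⟩ := hp
      rw [Finset.mem_sdiff] at hv
      have : insert v (W \ insert v A) = W \ A := insert_sdiff_self_of_mem hv.1 hv.2
      simp only [this]
  rw [hD]
  exact (by decide : ∀ a b c : ZMod 2, a + b = b + c + (a + c)) _ _ _


lemma bd_cprod {n : ℕ} (F : Fin n → Finset V → ZMod 2)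
    (hF : ∀ i W, bd (F i) W = 0) : ∀ W : Finset V, bd (cprod F) W = 0 := by
  induction n with
  | zero =>
    intro W
    show (∑ v ∈ Wᶜ, cprod F (insert v W)) = 0
    refine Finset.sum_eq_zero fun v _ => ?_
    show (if insert v W = ∅ then (1 : ZMod 2) else 0) = 0
    rw [if_neg (Finset.insert_ne_empty v W)]
  | succ n ih =>
    intro W
    show bd (conv (F 0) (cprod fun i => F i.succ)) W = 0
    rw [bd_conv]
    have h1 : bd (F 0) = fun _ => 0 := funext fun W' => hF 0 W'
    have h2 : bd (cprod fun i => F i.succ) = fun _ => 0 :=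
      funext fun W' => ih (fun i => F i.succ) (fun i W' => hF i.succ W') W'
    rw [h1, h2]
    simp [conv]

lemma cond_cons {n : ℕ} (A : Finset V) (t' : Fin n → Finset V) (S : Finset V) :
    ((∀ p q : Fin (n + 1), p ≠ q → Disjoint (Fin.cons (α := fun _ => Finset V) A t' p) (Fin.cons (α := fun _ => Finset V) A t' q)) ∧
      Finset.univ.biUnion (Fin.cons A t') = S)
    ↔ A ⊆ S ∧ (∀ p q, p ≠ q → Disjoint (t' p) (t' q)) ∧
        Finset.univ.biUnion t' = S \ A := by
  have hbi : Finset.univ.biUnion (Fin.cons A t') = A ∪ Finset.univ.biUnion t' := by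
    ext x
    simp only [Finset.mem_biUnion, Finset.mem_union, Finset.mem_univ, true_and]
    rw [Fin.exists_fin_succ]
    simp [Fin.cons_zero, Fin.cons_succ]
  constructor
  · rintro ⟨hdisj, hun⟩
    rw [hbi] at hun
    have hAS : A ⊆ S := hun ▸ Finset.subset_union_left
    have hd' : ∀ p q, p ≠ q → Disjoint (t' p) (t' q) := by
      intro p q hpq
      have := hdisj p.succ q.succ (fun e => hpq (Fin.succ_injective n e))
      simpa using this
    have hAd : ∀ i, Disjoint A (t' i) := by
      intro i
      have := hdisj 0 i.succ (Fin.succ_ne_zero i).symm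
      simpa using this
    refine ⟨hAS, hd', ?_⟩
    ext x
    simp only [Finset.mem_sdiff]
    constructor
    · intro hx
      obtain ⟨i, _, hxi⟩ := Finset.mem_biUnion.mp hx
      refine ⟨hun ▸ Finset.mem_union_right _ hx, fun hxA => ?_⟩
      exact Finset.disjoint_left.mp (hAd i) hxA hxi
    · rintro ⟨hxS, hxA⟩
      rw [← hun] at hxS
      rcases Finset.mem_union.mp hxS with hx | hx
      · exact absurd hx hxA
      · exact hx
  · rintro ⟨hAS, hd', hun'⟩
    have hsub : ∀ i, t' i ⊆ S \ A := by
      intro i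
      rw [← hun']
      exact Finset.subset_biUnion_of_mem t' (Finset.mem_univ i)
    have hAd : ∀ i, Disjoint A (t' i) := fun i =>
      (Finset.sdiff_disjoint.symm).mono_right (hsub i)
    constructor
    · intro p q hpq
      induction p using Fin.cases with
      | zero =>
        induction q using Fin.cases with
        | zero => exact absurd rfl hpq
        | succ j => simpa using hAd j
      | succ i =>
        induction q using Fin.cases with
        | zero => simpa using (hAd i).symm
        | succ j =>
          have : i ≠ j := fun e => hpq (by rw [e])
          simpa using hd' i j this
    · rw [hbi, hun', Finset.union_sdiff_of_subset hAS]

lemma sum_cons_eq {n : ℕ} {M : Type*} [AddCommMonoid M] (g : (Fin (n + 1) → Finset V) → M) :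
    (∑ t : Fin (n + 1) → Finset V, g t)
      = ∑ A : Finset V, ∑ t' : Fin n → Finset V, g (Fin.cons A t') := by
  rw [← (Fintype.sum_equiv (Fin.consEquiv fun _ : Fin (n + 1) => Finset V)
      (fun p : Finset V × (Fin n → Finset V) => g (Fin.cons p.1 p.2)) g fun p => rfl)]
  exact Fintype.sum_prod_type _

lemma cprod_expand {n : ℕ} (F : Fin n → Finset V → ZMod 2) (S : Finset V) :
    cprod F S = ∑ t : Fin n → Finset V,
      if (∀ p q, p ≠ q → Disjoint (t p) (t q)) ∧ Finset.univ.biUnion t = S then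
        ∏ p, F p (t p)
      else 0 := by
  induction n generalizing S with
  | zero =>
    have key : ∀ t : Fin 0 → Finset V,
        (if (∀ p q, p ≠ q → Disjoint (t p) (t q)) ∧ Finset.univ.biUnion t = S then
          ∏ p, F p (t p) else 0) = if S = ∅ then 1 else 0 := by
      intro t
      have h1 : ∀ p q : Fin 0, p ≠ q → Disjoint (t p) (t q) := fun p => p.elim0
      have h2 : Finset.univ.biUnion t = ∅ := by simp
      rw [h2]
      simp [h1, eq_comm]
    rw [Finset.sum_congr rfl fun t _ => key t]
    show _ = ∑ _t : Fin 0 → Finset V, _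
    rw [Finset.sum_const, Finset.card_univ]
    simp [cprod]
  | succ n ih =>
    rw [sum_cons_eq]
    have key : ∀ A : Finset V,
        (∑ t' : Fin n → Finset V,
          if (∀ p q, p ≠ q → Disjoint (Fin.cons (α := fun _ => Finset V) A t' p)
                (Fin.cons (α := fun _ => Finset V) A t' q)) ∧
              Finset.univ.biUnion (Fin.cons (α := fun _ => Finset V) A t') = S then
            ∏ p, F p (Fin.cons (α := fun _ => Finset V) A t' p)
          else 0)
        = if A ∈ S.powerset then F 0 A * cprod (fun i => F i.succ) (S \ A) else 0 := by
      intro A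
      by_cases hAS : A ⊆ S
      · rw [if_pos (Finset.mem_powerset.mpr hAS), ih, Finset.mul_sum]
        refine Finset.sum_congr rfl fun t' _ => ?_
        rw [mul_ite, mul_zero]
        exact if_congr ((cond_cons A t' S).trans (and_iff_right hAS))
          (by rw [Fin.prod_univ_succ]; simp) rfl
      · rw [if_neg fun hm => hAS (Finset.mem_powerset.mp hm)]
        refine Finset.sum_eq_zero fun t' _ => ?_
        exact if_neg fun hc => hAS (((cond_cons A t' S).mp hc).1)
    refine Eq.trans ?_ (Finset.sum_congr rfl fun A _ => key A).symm
    rw [Finset.sum_ite_mem, Finset.univ_inter]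
    rfl


/-- The count of sets `insert v W` equals the number of rooms containing `W`. -/
lemma count_insert_sum (d : ℕ) (hd : 1 ≤ d) (R : Multiset (Finset V))
    (hR : ∀ r ∈ R, r.card = d) (W : Finset V) (hW : W.card = d - 1) :
    (∑ v ∈ Wᶜ, R.count (insert v W)) = R.countP fun r => W ⊆ r := by
  induction R using Multiset.induction_on with
  | empty => simp
  | cons a R ih =>
    have ha : a.card = d := hR a (Multiset.mem_cons_self a R)
    have hR' : ∀ r ∈ R, r.card = d := fun r hr => hR r (Multiset.mem_cons_of_mem hr)
    simp only [Multiset.count_cons, Multiset.countP_cons, Finset.sum_add_distrib,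
      ih hR']
    congr 1
    by_cases hWa : W ⊆ a
    · rw [if_pos hWa]
      have hcard : (a \ W).card = 1 := by
        rw [Finset.card_sdiff_of_subset hWa, ha, hW]; omega
      obtain ⟨v, hv⟩ := Finset.card_eq_one.mp hcard
      have hva : v ∈ a ∧ v ∉ W := by
        have : v ∈ a \ W := hv ▸ Finset.mem_singleton_self v
        exact Finset.mem_sdiff.mp this
      have hins : insert v W = a := by
        apply Finset.Subset.antisymm
        · exact Finset.insert_subset hva.1 hWa
        · intro x hx
          by_cases hxW : x ∈ W
          · exact Finset.mem_insert_of_mem hxW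
          · have : x ∈ a \ W := Finset.mem_sdiff.mpr ⟨hx, hxW⟩
            rw [hv, Finset.mem_singleton] at this
            exact this ▸ Finset.mem_insert_self v W
      have step : ∀ u ∈ Wᶜ, (if insert u W = a then 1 else 0) = if u = v then 1 else 0 := by
        intro u hu
        rw [Finset.mem_compl] at hu
        congr 1
        rw [eq_iff_iff]
        constructor
        · intro he
          have : u ∈ a \ W := Finset.mem_sdiff.mpr ⟨he ▸ Finset.mem_insert_self u W, hu⟩
          rw [hv, Finset.mem_singleton] at this
          exact this
        · rintro rfl
          exact hins
      rw [Finset.sum_congr rfl step, Finset.sum_ite_eq' Wᶜ v fun _ => 1,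
        if_pos (Finset.mem_compl.mpr hva.2)]
    · rw [if_neg hWa]
      refine Finset.sum_eq_zero fun u hu => ?_
      refine if_neg fun he => hWa ?_
      exact he ▸ (Finset.subset_insert u W)

/-- The indicator (with multiplicity) of an oik is a cycle for the boundary. -/
lemma bd_oik (d : ℕ) (hd : 2 ≤ d) (R : Multiset (Finset V)) (hR : IsOik V d R)
    (W : Finset V) : bd (fun S => ((R.count S : ZMod 2))) W = 0 := by
  have : bd (fun S => ((R.count S : ZMod 2))) W
      = ((∑ v ∈ Wᶜ, R.count (insert v W) : ℕ) : ZMod 2) := by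
    rw [bd, Nat.cast_sum]
  rw [this]
  by_cases hW : W.card = d - 1
  · rw [count_insert_sum d (by omega) R hR.1 W hW]
    have hev : Even (R.countP fun r => W ⊆ r) := hR.2 W hW
    exact (ZMod.natCast_eq_zero_iff _ 2).mpr hev.two_dvd
  · have hzero : ∀ v ∈ Wᶜ, R.count (insert v W) = 0 := by
      intro v hv
      rw [Finset.mem_compl] at hv
      refine Multiset.count_eq_zero_of_notMem fun hmem => ?_
      have := hR.1 _ hmem
      rw [Finset.card_insert_of_notMem hv] at this
      omega
    rw [Finset.sum_congr rfl hzero]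
    simp

end Stmt16

/-- Let 𝓡_p be a d_p-oik on V for p ∈ [h] with |V| = Σ_p d_p.  Then the
number of ordered room partitions (R₁,…,R_h) with R_p ∈ 𝓡_p and
R₁ ∪ ⋯ ∪ R_h = V — counted with the multiplicities of the rooms in the
oiks — is even. -/
theorem stmt_16 {V : Type*} [Fintype V] [DecidableEq V] (h : ℕ) (hh : 0 < h)
    (d : Fin h → ℕ) (hd : ∀ p, 2 ≤ d p)
    (𝓡 : Fin h → Multiset (Finset V))
    (hoik : ∀ p, IsOik V (d p) (𝓡 p))
    (hV : Fintype.card V = ∑ p, d p) :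
    Even (∑ t : Fin h → Finset V,
      if (∀ p q, p ≠ q → Disjoint (t p) (t q)) ∧
          Finset.univ.biUnion t = Finset.univ then
        ∏ p, (𝓡 p).count (t p)
      else 0) := by
  classical
  set F : Fin h → Finset V → ZMod 2 := fun p S => ((𝓡 p).count S : ZMod 2) with hF
  -- V is nonempty
  have hpos : 0 < Fintype.card V := by
    rw [hV]
    have : Nonempty (Fin h) := ⟨⟨0, hh⟩⟩
    exact Finset.sum_pos (fun p _ => lt_of_lt_of_le (by norm_num) (hd p))
      Finset.univ_nonempty
  obtain ⟨x⟩ : Nonempty V := Fintype.card_pos_iff.mp hpos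
  -- the iterated convolution of the oik cycles is a cycle
  have hcycle : ∀ W : Finset V, Stmt16.bd (Stmt16.cprod F) W = 0 :=
    Stmt16.bd_cprod F fun p W => Stmt16.bd_oik (d p) (hd p) (𝓡 p) (hoik p) W
  -- hence the top coefficient vanishes
  have htop : Stmt16.cprod F Finset.univ = 0 := by
    have hb := hcycle ({x}ᶜ)
    rw [Stmt16.bd, compl_compl, Finset.sum_singleton] at hb
    have hins : insert x ({x}ᶜ : Finset V) = Finset.univ := by
      ext y
      simp only [Finset.mem_insert, Finset.mem_compl, Finset.mem_singleton,
        Finset.mem_univ, iff_true]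
      tauto
    rwa [hins] at hb
  -- reduce evenness to vanishing in ZMod 2
  rw [even_iff_two_dvd]
  rw [← ZMod.natCast_eq_zero_iff]
  have hcast : ((∑ t : Fin h → Finset V,
      if (∀ p q, p ≠ q → Disjoint (t p) (t q)) ∧
          Finset.univ.biUnion t = Finset.univ then
        ∏ p, (𝓡 p).count (t p)
      else 0 : ℕ) : ZMod 2)
      = ∑ t : Fin h → Finset V,
        if (∀ p q, p ≠ q → Disjoint (t p) (t q)) ∧
            Finset.univ.biUnion t = Finset.univ then
          ∏ p, F p (t p)
        else 0 := by
    rw [Nat.cast_sum]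
    refine Finset.sum_congr rfl fun t _ => ?_
    rw [apply_ite (Nat.cast : ℕ → ZMod 2), Nat.cast_prod, Nat.cast_zero]
  rw [hcast, ← Stmt16.cprod_expand F Finset.univ, htop]
end

section
/- Let C be a cycle in a graph G with a perfect matching M, such that every other edge of C belongs to M, and such that in a fixed traversal direction of C an even number of edges of C are forward-oriented with respect to a given orientation of G. Then the perfect matching M' = M △ C has sign opposite to M. -/
open Finset

def listing {n : ℕ} (e : Fin n → Fin (2 * n) × Fin (2 * n)) :
    Fin (2 * n) → Fin (2 * n) := fun i =>
  if i.val % 2 = 0 then (e ⟨i.val / 2, by omega⟩).1 else (e ⟨i.val / 2, by omega⟩).2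

def pairEquiv (k : ℕ) : Fin k × Fin 2 ≃ Fin (2 * k) where
  toFun x := ⟨2 * x.1.val + x.2.val, by have := x.1.isLt; have := x.2.isLt; omega⟩
  invFun i := ⟨⟨i.val / 2, by have := i.isLt; omega⟩, ⟨i.val % 2, by omega⟩⟩
  left_inv x := by
    obtain ⟨⟨j, hj⟩, r, hr⟩ := x
    simp only [Prod.mk.injEq, Fin.mk.injEq]
    omega
  right_inv i := by
    simp only [Fin.mk.injEq, Fin.ext_iff]
    omega

lemma listing_fst {n : ℕ} (e : Fin n → Fin (2 * n) × Fin (2 * n)) (i : Fin n)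
    (h : 2 * i.val < 2 * n) : listing e ⟨2 * i.val, h⟩ = (e i).1 := by
  simp only [listing]
  rw [if_pos (show ((⟨2 * i.val, h⟩ : Fin (2*n)).val % 2 = 0) by simp [Nat.mul_mod_right])]
  exact congrArg (fun t => (e t).1) (Fin.ext (by simp only [Fin.val_mk]; omega))

lemma listing_snd {n : ℕ} (e : Fin n → Fin (2 * n) × Fin (2 * n)) (i : Fin n)
    (h : 2 * i.val + 1 < 2 * n) : listing e ⟨2 * i.val + 1, h⟩ = (e i).2 := by
  simp only [listing]
  rw [if_neg (show ¬((⟨2 * i.val + 1, h⟩ : Fin (2*n)).val % 2 = 0) by simp only [Fin.val_mk]; omega)]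
  exact congrArg (fun t => (e t).2) (Fin.ext (by simp only [Fin.val_mk]; omega))

lemma listing_keys {n : ℕ} {e : Fin n → Fin (2 * n) × Fin (2 * n)}
    (hinj : Function.Injective (listing e)) (i i' : Fin n) :
    ((e i).1 = (e i').1 → i = i') ∧ ((e i).2 = (e i').2 → i = i') ∧ (e i).1 ≠ (e i').2 := by
  have hi := i.isLt; have hi' := i'.isLt
  have h1 := listing_fst e i (by omega)
  have h1' := listing_fst e i' (by omega)
  have h2 := listing_snd e i (by omega)
  have h2' := listing_snd e i' (by omega)
  refine ⟨?_, ?_, ?_⟩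
  · intro h
    rw [← h1, ← h1'] at h
    have := congrArg Fin.val (hinj h)
    simp at this
    exact Fin.ext (by omega)
  · intro h
    rw [← h2, ← h2'] at h
    have := congrArg Fin.val (hinj h)
    simp at this
    exact Fin.ext (by omega)
  · intro h
    rw [← h1, ← h2'] at h
    have := congrArg Fin.val (hinj h)
    simp at this
    omega

/-- Let C be a cycle c₀, c₁, …, c_{2k-1} (distinct vertices, indices mod 2k,
with nxt the cyclic successor of indices) in an oriented graph with perfect
matching M (given by the oriented edge list e, whose listing is a
permutation), such that every other edge of C — the edges from c_{2j} to
c_{2j+1} — belongs to M, the remaining edges of C are not in M, and, in the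
traversal direction of C, an even number of edges of C are forward-oriented
(b i records whether the edge of C from c_i to c_{nxt i} is forward).  Then
the perfect matching M' = M △ C (the matched cycle edges removed, the other
cycle edges added with their orientations, given by the oriented edge list
e') has sign opposite to M. -/
theorem stmt_17 (n k : ℕ) (hk : 0 < k)
    (e e' : Fin n → Fin (2 * n) × Fin (2 * n))
    (c : Fin (2 * k) → Fin (2 * n)) (hcinj : Function.Injective c)
    (nxt : Fin (2 * k) → Fin (2 * k))
    (hnxt : ∀ i, (nxt i).val = (i.val + 1) % (2 * k))
    (b : Fin (2 * k) → Bool)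
    (oedge : Fin (2 * k) → Fin (2 * n) × Fin (2 * n))
    (hoedge : ∀ i, oedge i = if b i then (c i, c (nxt i)) else (c (nxt i), c i))
    (heven : Even ((Finset.univ.filter fun i => b i = true).card))
    (hmatched :
      (Finset.univ.val.map fun j : Fin k => oedge ⟨2 * j.val, by omega⟩) ≤
        Finset.univ.val.map e)
    (hunmatched : ∀ j : Fin k,
      (c (nxt ⟨2 * j.val, by omega⟩), c (nxt (nxt ⟨2 * j.val, by omega⟩))) ∉
          Finset.univ.val.map e ∧
      (c (nxt (nxt ⟨2 * j.val, by omega⟩)), c (nxt ⟨2 * j.val, by omega⟩)) ∉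
          Finset.univ.val.map e)
    (he' : Finset.univ.val.map e' =
      Finset.univ.val.map e -
        (Finset.univ.val.map fun j : Fin k => oedge ⟨2 * j.val, by omega⟩) +
        Finset.univ.val.map fun j : Fin k => oedge (nxt ⟨2 * j.val, by omega⟩))
    (p p' : Equiv.Perm (Fin (2 * n)))
    (hp : ∀ i, p i = listing e i) (hp' : ∀ i, p' i = listing e' i) :
    Equiv.Perm.sign p' = -Equiv.Perm.sign p := by
  classical
  have hinj : Function.Injective (listing e) := by
    have h : listing e = ⇑p := funext fun u => (hp u).symm
    rw [h]; exact p.injective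
  have hinj' : Function.Injective (listing e') := by
    have h : listing e' = ⇑p' := funext fun u => (hp' u).symm
    rw [h]; exact p'.injective
  have key1 : ∀ {i i' : Fin n}, (e i).1 = (e i').1 → i = i' :=
    fun {i i'} h => (listing_keys hinj i i').1 h
  have key2 : ∀ {i i' : Fin n}, (e i).2 = (e i').2 → i = i' :=
    fun {i i'} h => (listing_keys hinj i i').2.1 h
  have key3 : ∀ i i' : Fin n, (e i).1 ≠ (e i').2 :=
    fun i i' => (listing_keys hinj i i').2.2
  have einj : Function.Injective e := fun i i' h => key1 (congrArg Prod.fst h)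
  have hlt0 : ∀ j : Fin k, 2 * j.val < 2 * k := fun j => by have := j.isLt; omega
  have hlt1 : ∀ j : Fin k, 2 * j.val + 1 < 2 * k := fun j => by have := j.isLt; omega
  -- the matched edges occur in e
  have hmm : ∀ j : Fin k, ∃ i : Fin n, e i = oedge ⟨2 * j.val, hlt0 j⟩ := by
    intro j
    have h1 : oedge ⟨2 * j.val, hlt0 j⟩ ∈
        (Finset.univ.val.map fun j : Fin k => oedge ⟨2 * j.val, by omega⟩) :=
      Multiset.mem_map.mpr ⟨j, Finset.mem_val.mpr (mem_univ j), rfl⟩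
    have h2 := Multiset.mem_of_le hmatched h1
    obtain ⟨i, -, hi⟩ := Multiset.mem_map.mp h2
    exact ⟨i, hi⟩
  choose mIdx hmIdx using hmm
  -- nxt on even positions
  have hnxt1 : ∀ j : Fin k, nxt ⟨2 * j.val, hlt0 j⟩ = ⟨2 * j.val + 1, hlt1 j⟩ := by
    intro j
    apply Fin.ext
    rw [hnxt]
    simp only [Fin.val_mk]
    exact Nat.mod_eq_of_lt (hlt1 j)
  -- the pieces of the cycle permutation
  set P := pairEquiv k with hPdef
  set ss : Fin k → Equiv.Perm (Fin 2) := fun j =>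
    if b ⟨2 * j.val, hlt0 j⟩ = b ⟨2 * j.val + 1, hlt1 j⟩ then 1 else Equiv.swap 0 1 with hssdef
  set T : Equiv.Perm (Fin (2 * k)) := P.permCongr (Equiv.prodCongrRight ss) with hTdef
  have h2k : 2 * k - 1 + 1 = 2 * k := by omega
  set R : Equiv.Perm (Fin (2 * k)) :=
    (finCongr h2k).permCongr (finRotate (2 * k - 1 + 1)) with hRdef
  have hR : ∀ x : Fin (2 * k), (R x).val = (x.val + 1) % (2 * k) := by
    intro x
    rw [hRdef]
    simp only [Equiv.permCongr_apply, finCongr_apply, finRotate_succ_apply, Fin.coe_cast,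
      Fin.val_add]
    have h1 : ((finCongr h2k).symm x).val = x.val := rfl
    have h2 : ((1 : Fin (2 * k - 1 + 1))).val = 1 := by
      simp [Fin.val_one]
      omega
    rw [h1, h2, h2k]
  have hP0 : ∀ j : Fin k, P (j, 0) = ⟨2 * j.val, hlt0 j⟩ := by
    intro j; apply Fin.ext; simp [hPdef, pairEquiv]
  have hP1 : ∀ j : Fin k, P (j, 1) = ⟨2 * j.val + 1, hlt1 j⟩ := by
    intro j; apply Fin.ext; simp [hPdef, pairEquiv]
  have hTP : ∀ (j : Fin k) (r : Fin 2), T (P (j, r)) = P (j, ss j r) := by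
    intro j r
    rw [hTdef, Equiv.permCongr_apply, Equiv.symm_apply_apply, Equiv.prodCongrRight_apply]
  -- sigma
  set emb : Fin (2 * k) ↪ Fin (2 * n) := ⟨c, hcinj⟩ with hembdef
  set sigma : Equiv.Perm (Fin (2 * n)) := (R * T).viaFintypeEmbedding emb with hsigmadef
  have hsc : ∀ t, sigma (c t) = c (R (T t)) := by
    intro t
    rw [hsigmadef]
    exact Equiv.Perm.viaFintypeEmbedding_apply_image (R * T) emb t
  have hsout : ∀ v, (∀ t, c t ≠ v) → sigma v = v := by
    intro v hv
    rw [hsigmadef]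
    apply Equiv.Perm.viaFintypeEmbedding_apply_notMem_range
    rintro ⟨t, rfl⟩
    exact hv t rfl
  clear_value sigma
  -- evaluation of sigma on the cycle, pairwise
  have hsigA : ∀ j : Fin k, sigma (c ⟨2 * j.val, hlt0 j⟩) =
      if b ⟨2 * j.val, hlt0 j⟩ = b ⟨2 * j.val + 1, hlt1 j⟩
        then c ⟨2 * j.val + 1, hlt1 j⟩ else c (nxt ⟨2 * j.val + 1, hlt1 j⟩) := by
    intro j
    rw [hsc]
    have hTX : T ⟨2 * j.val, hlt0 j⟩ = P (j, ss j 0) := by rw [← hP0 j, hTP]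
    rw [hTX]
    by_cases hb : b ⟨2 * j.val, hlt0 j⟩ = b ⟨2 * j.val + 1, hlt1 j⟩
    · rw [if_pos hb]
      have hss0 : ss j 0 = 0 := by simp only [hssdef]; rw [if_pos hb]; rfl
      rw [hss0, hP0 j]
      apply congrArg c
      apply Fin.ext
      rw [hR]
      simp only [Fin.val_mk]
      exact Nat.mod_eq_of_lt (hlt1 j)
    · rw [if_neg hb]
      have hss0 : ss j 0 = 1 := by
        simp only [hssdef]; rw [if_neg hb]; simp [Equiv.swap_apply_left]
      rw [hss0, hP1 j]
      apply congrArg c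
      apply Fin.ext
      rw [hR, hnxt]
  have hsigB : ∀ j : Fin k, sigma (c ⟨2 * j.val + 1, hlt1 j⟩) =
      if b ⟨2 * j.val, hlt0 j⟩ = b ⟨2 * j.val + 1, hlt1 j⟩
        then c (nxt ⟨2 * j.val + 1, hlt1 j⟩) else c ⟨2 * j.val + 1, hlt1 j⟩ := by
    intro j
    rw [hsc]
    have hTX : T ⟨2 * j.val + 1, hlt1 j⟩ = P (j, ss j 1) := by rw [← hP1 j, hTP]
    rw [hTX]
    by_cases hb : b ⟨2 * j.val, hlt0 j⟩ = b ⟨2 * j.val + 1, hlt1 j⟩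
    · rw [if_pos hb]
      have hss1 : ss j 1 = 1 := by simp only [hssdef]; rw [if_pos hb]; rfl
      rw [hss1, hP1 j]
      apply congrArg c
      apply Fin.ext
      rw [hR, hnxt]
    · rw [if_neg hb]
      have hss1 : ss j 1 = 0 := by
        simp only [hssdef]; rw [if_neg hb]; simp [Equiv.swap_apply_right]
      rw [hss1, hP0 j]
      apply congrArg c
      apply Fin.ext
      rw [hR]
      simp only [Fin.val_mk]
      exact Nat.mod_eq_of_lt (hlt1 j)
  -- the key edge computation
  have hedge : ∀ j : Fin k,
      (sigma (oedge ⟨2 * j.val, hlt0 j⟩).1, sigma (oedge ⟨2 * j.val, hlt0 j⟩).2) =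
        oedge (nxt ⟨2 * j.val, hlt0 j⟩) := by
    intro j
    rw [hnxt1 j, hoedge, hoedge, hnxt1 j]
    cases hA : b ⟨2 * j.val, hlt0 j⟩ <;> cases hB : b ⟨2 * j.val + 1, hlt1 j⟩ <;>
      simp only [hA, hB, if_true, if_false, Bool.false_eq_true, Bool.true_eq_false] <;>
      simp only [hsigA j, hsigB j, hA, hB] <;> simp
  -- every cycle vertex is covered by a matched edge
  have hcov : ∀ t : Fin (2 * k), ∃ j : Fin k,
      (oedge ⟨2 * j.val, hlt0 j⟩).1 = c t ∨ (oedge ⟨2 * j.val, hlt0 j⟩).2 = c t := by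
    intro t
    have htlt := t.isLt
    set j : Fin k := ⟨t.val / 2, by omega⟩ with hjdef
    refine ⟨j, ?_⟩
    have hjv : j.val = t.val / 2 := rfl
    rw [hoedge, hnxt1]
    have ht2 : t.val = 2 * j.val ∨ t.val = 2 * j.val + 1 := by rw [hjv]; omega
    rcases ht2 with h | h
    · have hc1 : (⟨2 * j.val, hlt0 j⟩ : Fin (2*k)) = t := Fin.ext (by simp only [Fin.val_mk]; omega)
      cases hb : b ⟨2 * j.val, hlt0 j⟩ <;> simp [hb, hc1]
    · have hc1 : (⟨2 * j.val + 1, hlt1 j⟩ : Fin (2*k)) = t := Fin.ext (by simp only [Fin.val_mk]; omega)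
      cases hb : b ⟨2 * j.val, hlt0 j⟩ <;> simp [hb, hc1]
  -- dichotomy
  have hsplit : ∀ i : Fin n,
      (∃ j, i = mIdx j) ∨ ((∀ t, c t ≠ (e i).1) ∧ (∀ t, c t ≠ (e i).2)) := by
    intro i
    by_cases hc1 : (∃ t, c t = (e i).1) ∨ (∃ t, c t = (e i).2)
    · left
      rcases hc1 with ⟨t, ht⟩ | ⟨t, ht⟩
      · obtain ⟨j, hj | hj⟩ := hcov t
        · exact ⟨j, (key1 (((congrArg Prod.fst (hmIdx j)).trans (hj.trans ht)))).symm⟩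
        · exact absurd ((congrArg Prod.snd (hmIdx j)).trans (hj.trans ht)).symm
            (key3 i (mIdx j))
      · obtain ⟨j, hj | hj⟩ := hcov t
        · exact absurd ((congrArg Prod.fst (hmIdx j)).trans (hj.trans ht))
            (key3 (mIdx j) i)
        · exact ⟨j, (key2 ((congrArg Prod.snd (hmIdx j)).trans (hj.trans ht))).symm⟩
    · right
      push_neg at hc1
      exact hc1
  -- non-matched edges stay
  have hnotm : ∀ i : Fin n, (∀ t, c t ≠ (e i).1) →
      e i ∉ (Finset.univ.val.map fun j : Fin k => oedge ⟨2 * j.val, by omega⟩) := by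
    intro i hi hmem
    obtain ⟨j, -, hj⟩ := Multiset.mem_map.mp hmem
    rw [hoedge] at hj
    split at hj
    · exact hi _ (congrArg Prod.fst hj)
    · exact hi _ (congrArg Prod.fst hj)
  have hnodupe : (Finset.univ.val.map e).Nodup := Finset.univ.nodup.map einj
  -- sigma maps edges of M to edges of M'
  have hmain : ∀ i : Fin n, ∃ i', e' i' = (sigma (e i).1, sigma (e i).2) := by
    intro i
    have hmem : (sigma (e i).1, sigma (e i).2) ∈ Finset.univ.val.map e' := by
      rcases hsplit i with ⟨j, rfl⟩ | ⟨h1, h2⟩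
      · rw [he']
        refine Multiset.mem_add.mpr (Or.inr ?_)
        refine Multiset.mem_map.mpr ⟨j, Finset.mem_val.mpr (mem_univ j), ?_⟩
        rw [← hedge j, hmIdx j]
      · rw [he']
        have hfix : (sigma (e i).1, sigma (e i).2) = e i := by
          rw [hsout _ h1, hsout _ h2]
        rw [hfix]
        refine Multiset.mem_add.mpr (Or.inl ?_)
        rw [← Multiset.count_pos, Multiset.count_sub]
        have hc1 : 0 < Multiset.count (e i) (Finset.univ.val.map e) :=
          Multiset.count_pos.mpr (Multiset.mem_map.mpr ⟨i, Finset.mem_val.mpr (mem_univ i), rfl⟩)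
        have hc2 : Multiset.count (e i)
            (Finset.univ.val.map fun j : Fin k => oedge ⟨2 * j.val, by omega⟩) = 0 :=
          Multiset.count_eq_zero.mpr (hnotm i h1)
        omega
    obtain ⟨i', -, hi'⟩ := Multiset.mem_map.mp hmem
    exact ⟨i', hi'⟩
  choose mm hmm' using hmain
  have hmminj : Function.Injective mm := by
    intro i i' h
    apply key1
    apply sigma.injective
    have h1 := congrArg Prod.fst (hmm' i)
    have h2 := congrArg Prod.fst (hmm' i')
    rw [h] at h1
    exact h1.symm.trans h2
  set mperm : Equiv.Perm (Fin n) :=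
    Equiv.ofBijective mm (Finite.injective_iff_bijective.mp hmminj) with hmpermdef
  set Q := pairEquiv n with hQdef
  have hmpermapp : ∀ i, mperm i = mm i := fun i => rfl
  clear_value mperm
  set tau : Equiv.Perm (Fin (2 * n)) :=
    Q.permCongr (Equiv.prodCongrLeft fun _ : Fin 2 => mperm) with htaudef
  clear_value tau
  have hkey : p' * tau = sigma * p := by
    apply Equiv.ext
    intro u
    obtain ⟨⟨i, r⟩, rfl⟩ : ∃ y, Q y = u := ⟨Q.symm u, Q.apply_symm_apply u⟩
    have h1 : tau (Q (i, r)) = Q (mperm i, r) := by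
      rw [htaudef, Equiv.permCongr_apply, Equiv.symm_apply_apply, Equiv.prodCongrLeft_apply]
    rw [Equiv.Perm.mul_apply, Equiv.Perm.mul_apply, h1]
    have hmp : mperm i = mm i := hmpermapp i
    have hilt := i.isLt
    have hmlt := (mm i).isLt
    have hr01 : r = 0 ∨ r = 1 := by
      rcases (by omega : r.val = 0 ∨ r.val = 1) with h | h
      · exact Or.inl (Fin.ext h)
      · exact Or.inr (Fin.ext h)
    rcases hr01 with rfl | rfl
    · have e1 : Q (mperm i, 0) = ⟨2 * (mm i).val, by omega⟩ := by
        apply Fin.ext; simp [hQdef, pairEquiv, hmp]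
      have e2 : Q (i, (0 : Fin 2)) = ⟨2 * i.val, by omega⟩ := by
        apply Fin.ext; simp [hQdef, pairEquiv]
      rw [e1, e2]
      simp only [hp, hp']
      rw [listing_fst e' (mm i) (by omega), listing_fst e i (by omega)]
      exact congrArg Prod.fst (hmm' i)
    · have e1 : Q (mperm i, 1) = ⟨2 * (mm i).val + 1, by omega⟩ := by
        apply Fin.ext; simp [hQdef, pairEquiv, hmp]
      have e2 : Q (i, (1 : Fin 2)) = ⟨2 * i.val + 1, by omega⟩ := by
        apply Fin.ext; simp [hQdef, pairEquiv]
      rw [e1, e2]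
      simp only [hp, hp']
      rw [listing_snd e' (mm i) (by omega), listing_snd e i (by omega)]
      exact congrArg Prod.snd (hmm' i)
  have hsign_tau : Equiv.Perm.sign tau = 1 := by
    rw [htaudef, Equiv.Perm.sign_permCongr, Equiv.Perm.sign_prodCongrLeft]
    rw [Finset.prod_const]
    simp [Int.units_sq]
  have hdeven : Even ((univ.filter fun j : Fin k =>
      ¬(b ⟨2 * j.val, hlt0 j⟩ = b ⟨2 * j.val + 1, hlt1 j⟩)).card) := by
    have hcard1 : (univ.filter fun i : Fin (2*k) => b i = true).card
        = ∑ x : Fin k × Fin 2, (if b (P x) = true then 1 else 0) := by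
      rw [Finset.card_filter]
      exact (Equiv.sum_comp P (fun i => if b i = true then 1 else 0)).symm
    have hsum2 : ∑ x : Fin k × Fin 2, (if b (P x) = true then 1 else 0)
        = ∑ j : Fin k, ((if b ⟨2 * j.val, hlt0 j⟩ = true then 1 else 0)
            + (if b ⟨2 * j.val + 1, hlt1 j⟩ = true then 1 else 0)) := by
      rw [Fintype.sum_prod_type]
      refine Finset.sum_congr rfl fun j _ => ?_
      rw [Fin.sum_univ_two, hP0 j, hP1 j]
    have hcard2 : (univ.filter fun j : Fin k =>
        ¬(b ⟨2 * j.val, hlt0 j⟩ = b ⟨2 * j.val + 1, hlt1 j⟩)).card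
        = ∑ j : Fin k,
            (if b ⟨2 * j.val, hlt0 j⟩ = b ⟨2 * j.val + 1, hlt1 j⟩ then 0 else 1) := by
      rw [Finset.card_filter]
      refine Finset.sum_congr rfl fun j _ => ?_
      by_cases hb : b ⟨2 * j.val, hlt0 j⟩ = b ⟨2 * j.val + 1, hlt1 j⟩ <;> simp [hb]
    rw [Nat.even_iff] at heven ⊢
    rw [hcard1, hsum2] at heven
    rw [hcard2, Finset.sum_nat_mod]
    have hpt : ∀ j : Fin k,
        (if b ⟨2 * j.val, hlt0 j⟩ = b ⟨2 * j.val + 1, hlt1 j⟩ then 0 else 1) % 2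
        = ((if b ⟨2 * j.val, hlt0 j⟩ = true then 1 else 0)
            + (if b ⟨2 * j.val + 1, hlt1 j⟩ = true then 1 else 0)) % 2 := by
      intro j
      cases hA : b ⟨2 * j.val, hlt0 j⟩ <;> cases hB : b ⟨2 * j.val + 1, hlt1 j⟩ <;>
        simp [hA, hB]
    rw [Finset.sum_congr rfl fun j _ => hpt j, ← Finset.sum_nat_mod]
    exact heven
  have hsign_T : Equiv.Perm.sign T = (-1 : ℤˣ) ^ ((univ.filter fun j : Fin k =>
      ¬(b ⟨2 * j.val, hlt0 j⟩ = b ⟨2 * j.val + 1, hlt1 j⟩)).card) := by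
    rw [hTdef, Equiv.Perm.sign_permCongr, Equiv.Perm.sign_prodCongrRight]
    have h1 : ∀ j : Fin k, Equiv.Perm.sign (ss j)
        = if b ⟨2 * j.val, hlt0 j⟩ = b ⟨2 * j.val + 1, hlt1 j⟩ then 1 else -1 := by
      intro j
      simp only [hssdef]
      split
      · simp
      · rw [Equiv.Perm.sign_swap (by decide)]
    rw [Finset.prod_congr rfl fun j _ => h1 j, Finset.prod_ite, Finset.prod_const,
      Finset.prod_const, one_pow, one_mul]
  have hsign_R : Equiv.Perm.sign R = (-1 : ℤˣ) ^ (2 * k - 1) := by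
    rw [hRdef, Equiv.Perm.sign_permCongr, sign_finRotate, Nat.add_sub_cancel]
  have hsign_sigma : Equiv.Perm.sign sigma = -1 := by
    rw [hsigmadef, Equiv.Perm.viaFintypeEmbedding_sign, map_mul, hsign_R, hsign_T, ← pow_add]
    obtain ⟨m, hm⟩ := hdeven
    exact Odd.neg_one_pow ⟨k - 1 + m, by omega⟩
  have hfinal := congrArg Equiv.Perm.sign hkey
  rw [map_mul, map_mul, hsign_tau, hsign_sigma, mul_one, neg_one_mul] at hfinal
  exact hfinal
end
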